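/- arXiv:1310.5292 — 5 statements merged into one kernel-verified Lean document; each statement's English description precedes it below -/
import Mathlib

section
/- Let A be an n×n nonnegative irreducible matrix and c a positive vector. Define M_i = (1/c_i)·Σ_j a_{ij}c_j, M = max_i a_{ii}, N = max_{i≠j} a_{ij}c_j/c_i, and assume M₁ ≥ M₂ ≥ ... ≥ M_n and N > 0. Then for each 1 ≤ i ≤ n, ρ(A) ≤ (M_i + M − N + √((M_i − M + N)² + 4N·Σ_{k=1}^{i−1}(M_k − M_i)))/2. -/
open Matrix Finset Real

private lemma foldr_max_le' (R : ℝ) (hR : 0 ≤ R) (s : Multiset ℝ)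
    (h : ∀ x ∈ s, x ≤ R) : s.foldr max 0 ≤ R := by
  induction s using Multiset.induction with
  | empty => simpa using hR
  | cons a s ih =>
    rw [Multiset.foldr_cons]
    exact max_le (h a (Multiset.mem_cons_self a s))
      (ih fun x hx => h x (Multiset.mem_cons_of_mem hx))

private lemma eig_vec {n : ℕ} (M : Matrix (Fin n) (Fin n) ℂ) (t : ℂ)
    (h : t ∈ M.charpoly.roots) :
    ∃ v : Fin n → ℂ, v ≠ 0 ∧ M.mulVec v = t • v := by
  have hroot : M.charpoly.IsRoot t := (Polynomial.mem_roots (M.charpoly_monic.ne_zero)).1 h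
  have hdet : (t • (1 : Matrix (Fin n) (Fin n) ℂ) - M).det = 0 := by
    have heq : (charmatrix M).map (Polynomial.evalRingHom t) = t • 1 - M := by
      ext i j
      by_cases hij : i = j
      · subst hij; simp [charmatrix_apply_eq, Matrix.one_apply, Matrix.smul_apply]
      · simp [charmatrix_apply_ne _ _ _ hij, Matrix.one_apply_ne hij, Matrix.smul_apply]
    have h2 := RingHom.map_det (Polynomial.evalRingHom t) (charmatrix M)
    rw [RingHom.mapMatrix_apply, heq] at h2
    rw [← h2]
    simpa [Matrix.charpoly] using hroot
  obtain ⟨v, hv0, hv⟩ := Matrix.exists_mulVec_eq_zero_iff.2 hdet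
  refine ⟨v, hv0, ?_⟩
  rw [Matrix.sub_mulVec, Matrix.smul_mulVec, Matrix.one_mulVec, sub_eq_zero] at hv
  exact hv.symm

private lemma ratio_le {n : ℕ} (i0 : Fin n) (A : Matrix (Fin n) (Fin n) ℝ)
    (hA : ∀ i j, 0 ≤ A i j) (Y : Fin n → ℝ) (hY : ∀ k, 0 < Y k) (R σ : ℝ)
    (hRY : ∀ k, ∑ j, A k j * Y j ≤ R * Y k)
    (w : Fin n → ℝ) (hw0 : ∀ j, 0 ≤ w j) (hwne : w ≠ 0)
    (hσ : ∀ k, σ * w k ≤ ∑ j, A k j * w j) : σ ≤ R := by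
  obtain ⟨j, -, hj⟩ := Finset.exists_max_image Finset.univ (fun k => w k / Y k)
    ⟨i0, Finset.mem_univ _⟩
  set u := w j / Y j with hu
  have hwu : ∀ k, w k ≤ u * Y k := fun k =>
    (div_le_iff₀ (hY k)).1 (hj k (Finset.mem_univ k))
  have hwjpos : 0 < w j := by
    obtain ⟨k, hk⟩ := Function.ne_iff.1 hwne
    have hk' : 0 < w k := lt_of_le_of_ne (hw0 k) (Ne.symm hk)
    have h1 : 0 < w k / Y k := div_pos hk' (hY k)
    have h2 := hj k (Finset.mem_univ k)
    have : 0 < u := lt_of_lt_of_le h1 h2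
    have := mul_pos this (hY j)
    rwa [hu, div_mul_cancel₀ _ (ne_of_gt (hY j))] at this
  have hu0 : 0 ≤ u := le_of_lt (div_pos hwjpos (hY j))
  have key : σ * w j ≤ R * w j := by
    calc σ * w j ≤ ∑ l, A j l * w l := hσ j
      _ ≤ ∑ l, A j l * (u * Y l) :=
        Finset.sum_le_sum fun l _ => mul_le_mul_of_nonneg_left (hwu l) (hA j l)
      _ = u * ∑ l, A j l * Y l := by rw [Finset.mul_sum]; apply Finset.sum_congr rfl; intros; ring
      _ ≤ u * (R * Y j) := mul_le_mul_of_nonneg_left (hRY j) hu0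
      _ = R * (u * Y j) := by ring
      _ = R * w j := by rw [hu, div_mul_cancel₀ _ (ne_of_gt (hY j))]
  exact le_of_mul_le_mul_right key hwjpos

/-- Spectral radius: largest modulus of a complex eigenvalue (root of the
characteristic polynomial). -/
noncomputable def specRad {n : ℕ} (A : Matrix (Fin n) (Fin n) ℝ) : ℝ :=
  (((A.map (Complex.ofReal)).charpoly.roots).map (fun z => ‖z‖)).foldr max 0

/-- Irreducibility of a nonnegative matrix. -/
def Irred {n : ℕ} (A : Matrix (Fin n) (Fin n) ℝ) : Prop :=
  ∀ i j : Fin n, ∃ k : ℕ, 0 < (A ^ k) i j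

theorem stmt_1 {n : ℕ} (A : Matrix (Fin n) (Fin n) ℝ)
    (hA : ∀ i j, 0 ≤ A i j) (hirr : Irred A)
    (c : Fin n → ℝ) (hc : ∀ i, 0 < c i)
    (Mv : Fin n → ℝ) (hMv : ∀ i, Mv i = (1 / c i) * ∑ j, A i j * c j)
    (M : ℝ) (hM : IsGreatest {x | ∃ i, x = A i i} M)
    (N : ℝ) (hN : IsGreatest {x | ∃ i j, i ≠ j ∧ x = A i j * c j / c i} N)
    (hord : ∀ i j : Fin n, i ≤ j → Mv j ≤ Mv i) (hNpos : 0 < N) :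
    ∀ i : Fin n, specRad A ≤
      (Mv i + M - N +
        Real.sqrt ((Mv i - M + N) ^ 2 + 4 * N * ∑ k ∈ Finset.Iio i, (Mv k - Mv i))) / 2 := by
  intro i
  have hcMv : ∀ k, ∑ j, A k j * c j = c k * Mv k := by
    intro k
    rw [hMv k, ← mul_assoc, mul_one_div, div_self (ne_of_gt (hc k)), one_mul]
  have hMvnn : ∀ k, 0 ≤ Mv k := by
    intro k
    rw [hMv k]
    exact mul_nonneg (le_of_lt (by have := hc k; positivity)) (Finset.sum_nonneg fun j _ =>
      mul_nonneg (hA k j) (le_of_lt (hc j)))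
  have hNc : ∀ k j : Fin n, k ≠ j → A k j * c j ≤ N * c k := by
    intro k j hkj
    have h1 := hN.2 ⟨k, j, hkj, rfl⟩
    calc A k j * c j = (A k j * c j / c k) * c k := (div_mul_cancel₀ _ (ne_of_gt (hc k))).symm
      _ ≤ N * c k := mul_le_mul_of_nonneg_right h1 (le_of_lt (hc k))
  have hMd : ∀ k, A k k ≤ M := fun k => hM.2 ⟨k, rfl⟩
  set S : ℝ := ∑ k ∈ Finset.Iio i, (Mv k - Mv i) with hSdef
  have hSterm : ∀ k ∈ Finset.Iio i, 0 ≤ Mv k - Mv i := by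
    intro k hk
    have : k ≤ i := le_of_lt (Finset.mem_Iio.1 hk)
    linarith [hord k i this]
  have hS0 : 0 ≤ S := Finset.sum_nonneg hSterm
  have h4NS : 0 ≤ 4 * N * S := mul_nonneg (mul_nonneg (by norm_num) hNpos.le) hS0
  set D : ℝ := (Mv i - M + N) ^ 2 + 4 * N * S with hDdef
  have hD0 : 0 ≤ D := by rw [hDdef]; nlinarith [sq_nonneg (Mv i - M + N)]
  set R : ℝ := (Mv i + M - N + Real.sqrt D) / 2 with hRdef
  have hsq : Real.sqrt D ^ 2 = D := Real.sq_sqrt hD0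
  have habs : |Mv i - M + N| ≤ Real.sqrt D := by
    rw [← Real.sqrt_sq_eq_abs]
    apply Real.sqrt_le_sqrt
    rw [hDdef]; linarith
  have hRMi : Mv i ≤ R := by
    have h1 := le_abs_self (Mv i - M + N)
    rw [hRdef]; linarith
  have hRMN : M - N ≤ R := by
    have h1 := neg_abs_le (Mv i - M + N)
    rw [hRdef]; linarith
  have hR0 : 0 ≤ R := le_trans (hMvnn i) hRMi
  have hkey : (R - Mv i) * (R - (M - N)) = N * S := by
    rw [hRdef]
    linear_combination (1/4 : ℝ) * hsq + (1/4 : ℝ) * hDdef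
  have hγ0 : 0 ≤ R - (M - N) := by linarith
  clear_value S D R
  set y : Fin n → ℝ := fun k => 1 + (if k < i then (Mv k - Mv i) / (R - (M - N)) else 0)
    with hydef
  have hy1 : ∀ k, 1 ≤ y k := by
    intro k
    rw [hydef]
    simp only
    split
    · next hk =>
        have h1 : 0 ≤ Mv k - Mv i := hSterm k (Finset.mem_Iio.2 hk)
        have h2 := div_nonneg h1 hγ0
        linarith
    · norm_num
  have hypos : ∀ k, 0 < y k := fun k => lt_of_lt_of_le one_pos (hy1 k)
  have hsplit : ∀ k, ∑ j, A k j * (c j * y j)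
      = c k * Mv k + ∑ j ∈ Finset.Iio i, A k j * c j * ((Mv j - Mv i) / (R - (M - N))) := by
    intro k
    have h1 : ∀ j : Fin n, A k j * (c j * y j)
        = A k j * c j + (if j ∈ Finset.Iio i then A k j * c j * ((Mv j - Mv i) / (R - (M - N)))
          else 0) := by
      intro j
      rw [hydef]
      simp only [Finset.mem_Iio]
      split <;> ring
    rw [Finset.sum_congr rfl fun j _ => h1 j, Finset.sum_add_distrib,
      Finset.sum_ite_mem, Finset.univ_inter, hcMv k]
  have hrow : ∀ k, ∑ j, A k j * (c j * y j) ≤ R * (c k * y k) := by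
    intro k
    rw [hsplit k]
    by_cases hS : S = 0
    · have hz : ∀ j ∈ Finset.Iio i, Mv j - Mv i = 0 :=
        (Finset.sum_eq_zero_iff_of_nonneg hSterm).1 (by rw [← hSdef, hS])
      have hT : ∑ j ∈ Finset.Iio i, A k j * c j * ((Mv j - Mv i) / (R - (M - N))) = 0 :=
        Finset.sum_eq_zero fun j hj => by rw [hz j hj, zero_div, mul_zero]
      rw [hT, add_zero]
      have hMvkR : Mv k ≤ R := by
        by_cases hki : k < i
        · have h6 := hz k (Finset.mem_Iio.2 hki)
          have h7 : Mv k = Mv i := by linarith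
          linarith
        · have h6 : i ≤ k := le_of_not_gt hki
          linarith [hord i k h6]
      calc c k * Mv k ≤ c k * R := mul_le_mul_of_nonneg_left hMvkR (le_of_lt (hc k))
        _ = R * (c k * 1) := by ring
        _ ≤ R * (c k * y k) := by
            apply mul_le_mul_of_nonneg_left _ hR0
            exact mul_le_mul_of_nonneg_left (hy1 k) (le_of_lt (hc k))
    · have hSpos : 0 < S := lt_of_le_of_ne hS0 (Ne.symm hS)
      have hγpos : 0 < R - (M - N) := by
        rcases lt_or_eq_of_le hγ0 with h | h
        · exact h
        · exfalso; nlinarith [hkey]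
      have hγne : R - (M - N) ≠ 0 := ne_of_gt hγpos
      by_cases hk : k < i
      · have hkmem : k ∈ Finset.Iio i := Finset.mem_Iio.2 hk
        have hdk0 : 0 ≤ Mv k - Mv i := hSterm k hkmem
        have hyk : y k = 1 + (Mv k - Mv i) / (R - (M - N)) := by rw [hydef]; simp [hk]
        have hsum_split : ∑ j ∈ Finset.Iio i, A k j * c j * ((Mv j - Mv i) / (R - (M - N)))
            = A k k * c k * ((Mv k - Mv i) / (R - (M - N)))
              + ∑ j ∈ (Finset.Iio i).erase k, A k j * c j * ((Mv j - Mv i) / (R - (M - N))) :=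
          (Finset.add_sum_erase _ _ hkmem).symm
        have herase : ∑ j ∈ (Finset.Iio i).erase k, A k j * c j * ((Mv j - Mv i) / (R - (M - N)))
            ≤ N * c k * ((S - (Mv k - Mv i)) / (R - (M - N))) := by
          have h1 : ∑ j ∈ (Finset.Iio i).erase k, A k j * c j * ((Mv j - Mv i) / (R - (M - N)))
              ≤ ∑ j ∈ (Finset.Iio i).erase k, N * c k * ((Mv j - Mv i) / (R - (M - N))) := by
            apply Finset.sum_le_sum
            intro j hj
            have hjk : k ≠ j := fun h => (Finset.mem_erase.1 hj).1 h.symm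
            exact mul_le_mul_of_nonneg_right (hNc k j hjk)
              (div_nonneg (hSterm j (Finset.mem_erase.1 hj).2) hγ0)
          have h2 : ∑ j ∈ (Finset.Iio i).erase k, N * c k * ((Mv j - Mv i) / (R - (M - N)))
              = N * c k * ((S - (Mv k - Mv i)) / (R - (M - N))) := by
            rw [← Finset.mul_sum, ← Finset.sum_div]
            have h3 := Finset.add_sum_erase (Finset.Iio i) (fun j => Mv j - Mv i) hkmem
            rw [← hSdef] at h3
            have h4 : ∑ j ∈ (Finset.Iio i).erase k, (Mv j - Mv i) = S - (Mv k - Mv i) := by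
              linarith
            rw [h4]
          linarith
        have hterm : A k k * c k * ((Mv k - Mv i) / (R - (M - N)))
            ≤ M * c k * ((Mv k - Mv i) / (R - (M - N))) := by
          apply mul_le_mul_of_nonneg_right _ (div_nonneg hdk0 hγ0)
          exact mul_le_mul_of_nonneg_right (hMd k) (le_of_lt (hc k))
        have heq2 : c k * Mv k + M * c k * ((Mv k - Mv i) / (R - (M - N)))
            + N * c k * ((S - (Mv k - Mv i)) / (R - (M - N)))
            = R * (c k * (1 + (Mv k - Mv i) / (R - (M - N)))) := by
          field_simp
          linear_combination (-(c k)) * hkey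
        rw [hsum_split, hyk]
        linarith
      · have hik : i ≤ k := le_of_not_gt hk
        have hyk : y k = 1 := by rw [hydef]; simp [hk]
        have hT : ∑ j ∈ Finset.Iio i, A k j * c j * ((Mv j - Mv i) / (R - (M - N)))
            ≤ N * c k * (S / (R - (M - N))) := by
          have h1 : ∑ j ∈ Finset.Iio i, A k j * c j * ((Mv j - Mv i) / (R - (M - N)))
              ≤ ∑ j ∈ Finset.Iio i, N * c k * ((Mv j - Mv i) / (R - (M - N))) := by
            apply Finset.sum_le_sum
            intro j hj
            have hjk : k ≠ j := by
              intro h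
              exact hk (h ▸ Finset.mem_Iio.1 hj)
            exact mul_le_mul_of_nonneg_right (hNc k j hjk) (div_nonneg (hSterm j hj) hγ0)
          have h2 : ∑ j ∈ Finset.Iio i, N * c k * ((Mv j - Mv i) / (R - (M - N)))
              = N * c k * (S / (R - (M - N))) := by
            rw [← Finset.mul_sum, ← Finset.sum_div, ← hSdef]
          linarith
        have hNSg : N * c k * (S / (R - (M - N))) = c k * (R - Mv i) := by
          rw [mul_div_assoc', div_eq_iff hγne]
          linear_combination (-(c k)) * hkey
        have hMvk : Mv k ≤ Mv i := hord i k hik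
        rw [hyk, mul_one]
        have h5 : c k * Mv k ≤ c k * Mv i :=
          mul_le_mul_of_nonneg_left hMvk (le_of_lt (hc k))
        have h6 : R * c k = c k * R := by ring
        nlinarith [hT, hNSg, h5]
  -- final assembly
  show specRad A ≤ R
  rw [specRad]
  apply foldr_max_le' R hR0
  intro x hx
  obtain ⟨z, hz, rfl⟩ := Multiset.mem_map.1 hx
  obtain ⟨v, hv0, hveq⟩ := eig_vec (A.map Complex.ofReal) z hz
  set w : Fin n → ℝ := fun j => ‖v j‖ with hwdef
  have hw0 : ∀ j, 0 ≤ w j := fun j => norm_nonneg (v j)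
  have hwne : w ≠ 0 := by
    obtain ⟨a, ha⟩ := Function.ne_iff.1 hv0
    exact Function.ne_iff.2 ⟨a, by simpa [hwdef] using norm_ne_zero_iff.mpr ha⟩
  have hσ : ∀ k, ‖z‖ * w k ≤ ∑ j, A k j * w j := by
    intro k
    have hk := congrFun hveq k
    rw [Matrix.mulVec, dotProduct] at hk
    have h1 : ‖z‖ * w k = ‖∑ j, (A.map Complex.ofReal) k j * v j‖ := by
      rw [hk]
      simp [hwdef, _root_.map_mul]
    rw [h1]
    calc ‖∑ j, (A.map Complex.ofReal) k j * v j‖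
        ≤ ∑ j, ‖(A.map Complex.ofReal) k j * v j‖ :=
          norm_sum_le _ _
      _ = ∑ j, A k j * w j := by
          apply Finset.sum_congr rfl
          intro j _
          rw [norm_mul]
          simp [Matrix.map_apply, Complex.norm_real, Real.norm_eq_abs, abs_of_nonneg (hA k j), hwdef]
  exact ratio_le i A hA (fun k => c k * y k)
    (fun k => mul_pos (hc k) (hypos k)) R (‖z‖) hrow w hw0 hwne hσ
end

section
/- Let A be an n×n nonnegative irreducible matrix and c a positive vector. Define M_i = (1/c_i)·Σ_j a_{ij}c_j, S = min_i a_{ii}, T = min_{i≠j} a_{ij}c_j/c_i, and assume M₁ ≥ M₂ ≥ ... ≥ M_n. Then ρ(A) ≥ (M_n + S − T + √((M_n − S + T)² + 4T·Σ_{k=1}^{n−1}(M_k − M_n)))/2. -/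
open Matrix Finset Real

section Aux

open Filter Topology

attribute [local instance] Matrix.linftyOpNormedAddCommGroup Matrix.linftyOpNormedRing
  Matrix.linftyOpNormedAlgebra

lemma foldr_max_nonneg (s : Multiset ℝ) : 0 ≤ s.foldr max 0 :=
  Multiset.induction_on s le_rfl (fun a t ih => by
    rw [Multiset.foldr_cons]; exact le_max_of_le_right ih)

lemma le_foldr_max : ∀ (s : Multiset ℝ), ∀ a ∈ s, a ≤ s.foldr max 0 := fun s =>
  Multiset.induction_on s (by simp) (fun b t ih a ha => by
    rw [Multiset.foldr_cons]
    rcases Multiset.mem_cons.mp ha with h | h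
    · exact h ▸ le_max_left _ _
    · exact le_max_of_le_right (ih a h))

lemma specRad_nonneg {n : ℕ} (A : Matrix (Fin n) (Fin n) ℝ) : 0 ≤ specRad A :=
  foldr_max_nonneg _

lemma charpoly_eval {m : ℕ} (M : Matrix (Fin m) (Fin m) ℂ) (z : ℂ) :
    M.charpoly.eval z = (algebraMap ℂ (Matrix (Fin m) (Fin m) ℂ) z - M).det := by
  rw [Matrix.charpoly, ← Polynomial.coe_evalRingHom, RingHom.map_det]
  congr 1
  ext i j
  by_cases hij : i = j
  · subst hij
    simp [Matrix.charmatrix_apply_eq, Matrix.algebraMap_matrix_apply]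
  · simp [Matrix.charmatrix_apply_ne _ _ _ hij, Matrix.algebraMap_matrix_apply, hij]

lemma spectralRadius_le_specRad {n : ℕ} (A : Matrix (Fin n) (Fin n) ℝ) :
    spectralRadius ℂ (A.map Complex.ofReal) ≤ ENNReal.ofReal (specRad A) := by
  rw [spectralRadius]
  refine iSup₂_le fun z hz => ?_
  rw [← ENNReal.ofReal_coe_nnreal, coe_nnnorm]
  refine ENNReal.ofReal_le_ofReal ?_
  set M := A.map Complex.ofReal
  have h1 : ¬ IsUnit (algebraMap ℂ (Matrix (Fin n) (Fin n) ℂ) z - M) := spectrum.mem_iff.mp hz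
  have h2 : (algebraMap ℂ (Matrix (Fin n) (Fin n) ℂ) z - M).det = 0 := by
    by_contra h
    exact h1 ((Matrix.isUnit_iff_isUnit_det _).mpr (isUnit_iff_ne_zero.mpr h))
  have h3 : M.charpoly.IsRoot z := by
    rw [Polynomial.IsRoot, charpoly_eval, h2]
  have h4 : z ∈ M.charpoly.roots :=
    Polynomial.mem_roots'.mpr ⟨(Matrix.charpoly_monic M).ne_zero, h3⟩
  exact le_foldr_max _ _ (Multiset.mem_map.mpr ⟨z, h4, rfl⟩)

/-- Collatz–Wielandt type lower bound for the spectral radius of a nonnegative matrix. -/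
lemma cw {n : ℕ} (A : Matrix (Fin n) (Fin n) ℝ) (hA : ∀ i j, 0 ≤ A i j)
    (r : ℝ) (hr : 0 ≤ r) (y : Fin n → ℝ) (hy : ∀ i, 0 ≤ y i) (i₀ : Fin n) (hy0 : 0 < y i₀)
    (h : ∀ i, r * y i ≤ A.mulVec y i) : r ≤ specRad A := by
  rcases eq_or_lt_of_le hr with h0 | hrpos
  · exact h0 ▸ specRad_nonneg _
  haveI : CompleteSpace (Matrix (Fin n) (Fin n) ℂ) := FiniteDimensional.complete ℂ _
  set M := A.map Complex.ofReal with hM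
  have hgel := spectrum.pow_norm_pow_one_div_tendsto_nhds_spectralRadius M
  have hpow : ∀ (k : ℕ) i j, 0 ≤ (A ^ k) i j := by
    intro k
    induction k with
    | zero => intro i j; by_cases hij : i = j <;> simp [pow_zero, Matrix.one_apply, hij]
    | succ k ih =>
      intro i j
      rw [pow_succ, Matrix.mul_apply]
      exact Finset.sum_nonneg fun l _ => mul_nonneg (ih i l) (hA l j)
  have hiter : ∀ (k : ℕ) i, r ^ k * y i ≤ ((A ^ k).mulVec y) i := by
    intro k
    induction k with
    | zero => intro i; simp [pow_zero, Matrix.one_mulVec]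
    | succ k ih =>
      intro i
      have hrw : (A ^ (k + 1)).mulVec y i = A.mulVec ((A ^ k).mulVec y) i := by
        rw [pow_succ', ← Matrix.mulVec_mulVec]
      rw [hrw]
      have hstep : r ^ k * (A.mulVec y i) ≤ A.mulVec ((A ^ k).mulVec y) i :=
        calc r ^ k * A.mulVec y i = ∑ j, r ^ k * (A i j * y j) := by
              simp only [Matrix.mulVec, dotProduct, Finset.mul_sum]
          _ ≤ ∑ j, A i j * ((A ^ k).mulVec y) j := Finset.sum_le_sum fun j _ => by
              have h2 := mul_le_mul_of_nonneg_left (ih j) (hA i j)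
              calc r ^ k * (A i j * y j) = A i j * (r ^ k * y j) := by ring
                _ ≤ A i j * ((A ^ k).mulVec y) j := h2
          _ = A.mulVec ((A ^ k).mulVec y) i := by
              simp only [Matrix.mulVec, dotProduct]
      have h4 : r ^ (k + 1) * y i = r ^ k * (r * y i) := by ring
      rw [h4]
      exact le_trans (mul_le_mul_of_nonneg_left (h i) (pow_nonneg hr k)) hstep
  set B : ℝ := ∑ j, y j with hBdef
  have hB : 0 < B := lt_of_lt_of_le hy0 (Finset.single_le_sum (fun j _ => hy j) (Finset.mem_univ i₀))
  set C : ℝ := y i₀ / B with hCdef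
  have hC : 0 < C := div_pos hy0 hB
  have hnorm : ∀ k : ℕ, C * r ^ k ≤ ‖M ^ k‖ := by
    intro k
    have h1 : r ^ k * y i₀ ≤ ∑ j, (A ^ k) i₀ j * y j := by
      have := hiter k i₀
      simpa [Matrix.mulVec, dotProduct] using this
    have h2 : ∑ j, (A ^ k) i₀ j * y j ≤ (∑ j, (A ^ k) i₀ j) * B := by
      rw [Finset.sum_mul]
      refine Finset.sum_le_sum fun j _ => ?_
      refine mul_le_mul_of_nonneg_left ?_ (hpow k i₀ j)
      exact Finset.single_le_sum (fun l _ => hy l) (Finset.mem_univ j)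
    have hMk : M ^ k = (A ^ k).map Complex.ofReal := by
      have e0 : ∀ (X : Matrix (Fin n) (Fin n) ℝ), X.map Complex.ofReal =
          (Complex.ofRealHom.mapMatrix : Matrix (Fin n) (Fin n) ℝ →+* _) X := fun X => rfl
      rw [hM, e0, e0, ← map_pow]
    have h3 : ∑ j, (A ^ k) i₀ j ≤ ‖M ^ k‖ := by
      rw [Matrix.linfty_opNorm_def]
      have h5 := Finset.le_sup (f := fun i => ∑ j, ‖(M ^ k) i j‖₊) (Finset.mem_univ i₀)
      have h6 : ((∑ j, ‖(M ^ k) i₀ j‖₊ : NNReal) : ℝ) ≤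
          ((Finset.univ.sup fun i => ∑ j, ‖(M ^ k) i j‖₊ : NNReal) : ℝ) := by
        exact_mod_cast h5
      refine le_trans ?_ h6
      push_cast
      rw [hMk]
      refine le_of_eq (Finset.sum_congr rfl fun j _ => ?_).symm
      simp [Matrix.map_apply, Complex.norm_real, abs_of_nonneg (hpow k i₀ j)]
    have : r ^ k * y i₀ ≤ ‖M ^ k‖ * B := le_trans h1 (le_trans h2 (by
      exact mul_le_mul_of_nonneg_right h3 hB.le))
    rw [hCdef, div_mul_eq_mul_div, div_le_iff₀ hB]
    linarith
  have hC1 : Tendsto (fun k : ℕ => C ^ (1 / (k : ℝ))) atTop (𝓝 1) := by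
    have := (tendsto_const_nhds (x := C) (f := atTop (α := ℕ))).rpow
      tendsto_one_div_atTop_nhds_zero_nat (Or.inl (ne_of_gt hC))
    simpa [Real.rpow_zero] using this
  have hf : Tendsto (fun k : ℕ => ENNReal.ofReal (C ^ (1 / (k : ℝ)) * r)) atTop
      (𝓝 (ENNReal.ofReal r)) := by
    have h7 : Tendsto (fun k : ℕ => C ^ (1 / (k : ℝ)) * r) atTop (𝓝 r) := by
      simpa using hC1.mul_const r
    exact (ENNReal.continuous_ofReal.tendsto r).comp h7
  have hle : ∀ᶠ k : ℕ in atTop,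
      ENNReal.ofReal (C ^ (1 / (k : ℝ)) * r) ≤ ENNReal.ofReal (‖M ^ k‖ ^ (1 / (k : ℝ))) := by
    filter_upwards [Filter.eventually_ge_atTop 1] with k hk
    refine ENNReal.ofReal_le_ofReal ?_
    have hk0 : (k : ℝ) ≠ 0 := by positivity
    have e1 : (C * r ^ k) ^ (1 / (k : ℝ)) = C ^ (1 / (k : ℝ)) * r := by
      rw [Real.mul_rpow hC.le (pow_nonneg hr k), ← Real.rpow_natCast r k,
        ← Real.rpow_mul hr, mul_one_div_cancel hk0, Real.rpow_one]
    rw [← e1]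
    exact Real.rpow_le_rpow (by positivity) (hnorm k) (by positivity)
  have hmain : ENNReal.ofReal r ≤ spectralRadius ℂ M := le_of_tendsto_of_tendsto hf hgel hle
  have := le_trans hmain (spectralRadius_le_specRad A)
  rwa [ENNReal.ofReal_le_ofReal_iff (specRad_nonneg A)] at this

end Aux

theorem stmt_2 {n : ℕ} (hn : 0 < n) (A : Matrix (Fin n) (Fin n) ℝ)
    (hA : ∀ i j, 0 ≤ A i j) (hirr : Irred A)
    (c : Fin n → ℝ) (hc : ∀ i, 0 < c i)
    (Mv : Fin n → ℝ) (hMv : ∀ i, Mv i = (1 / c i) * ∑ j, A i j * c j)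
    (S : ℝ) (hS : IsLeast {x | ∃ i, x = A i i} S)
    (T : ℝ) (hT : IsLeast {x | ∃ i j, i ≠ j ∧ x = A i j * c j / c i} T)
    (hord : ∀ i j : Fin n, i ≤ j → Mv j ≤ Mv i) :
    specRad A ≥
      (Mv ⟨n - 1, by omega⟩ + S - T +
        Real.sqrt ((Mv ⟨n - 1, by omega⟩ - S + T) ^ 2 +
          4 * T * ∑ k ∈ Finset.Iio (⟨n - 1, by omega⟩ : Fin n),
            (Mv k - Mv ⟨n - 1, by omega⟩))) / 2 := by
  classical
  obtain ⟨i₀, hSi⟩ := hS.1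
  have hSle : ∀ i, S ≤ A i i := fun i => hS.2 ⟨i, rfl⟩
  have hTle : ∀ i j, i ≠ j → T * c i ≤ A i j * c j := by
    intro i j hij
    have h := hT.2 ⟨i, j, hij, rfl⟩
    rw [le_div_iff₀ (hc i)] at h
    linarith
  have hT0 : 0 ≤ T := by
    obtain ⟨i, j, hij, hTe⟩ := hT.1
    rw [hTe]
    exact div_nonneg (mul_nonneg (hA i j) (hc j).le) (hc i).le
  have hS0 : 0 ≤ S := hSi ▸ hA i₀ i₀
  set N : Fin n := ⟨n - 1, by omega⟩ with hNdef
  show specRad A ≥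
      (Mv N + S - T + Real.sqrt ((Mv N - S + T) ^ 2 +
        4 * T * ∑ k ∈ Finset.Iio N, (Mv k - Mv N))) / 2
  have hle : ∀ i : Fin n, i ≤ N := fun i => by
    have := i.isLt
    exact Fin.le_def.mpr (by simp only [hNdef]; omega)
  have hMN : ∀ i, Mv N ≤ Mv i := fun i => hord i N (hle i)
  have hsum : ∀ i, ∑ j, A i j * c j = c i * Mv i := by
    intro i
    rw [hMv i, ← mul_assoc, mul_one_div, div_self (hc i).ne', one_mul]
  have hdiag : ∀ i, A i i ≤ Mv i := by
    intro i
    have h1 : A i i * c i ≤ ∑ j, A i j * c j :=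
      Finset.single_le_sum (f := fun j => A i j * c j)
        (fun j _ => mul_nonneg (hA i j) (hc j).le) (Finset.mem_univ i)
    rw [hsum i] at h1
    nlinarith [hc i]
  have hMv0 : 0 ≤ Mv N := le_trans hS0 (le_trans (hSle N) (hdiag N))
  set Sig0 : ℝ := ∑ k ∈ Finset.Iio N, (Mv k - Mv N) with hSig0
  have hSignn : 0 ≤ Sig0 := Finset.sum_nonneg fun k _ => by linarith [hMN k]
  have huniv : ∑ j, (Mv j - Mv N) = Sig0 := by
    have e1 : Finset.univ.erase N = Finset.Iio N := by
      ext j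
      simp only [Finset.mem_erase, Finset.mem_univ, and_true, Finset.mem_Iio]
      constructor
      · intro hj; exact lt_of_le_of_ne (hle j) hj
      · exact ne_of_lt
    rw [← Finset.sum_erase_add _ _ (Finset.mem_univ N), e1, hSig0]
    simp
  set D : ℝ := (Mv N - S + T) ^ 2 + 4 * T * Sig0 with hD
  have hDnn : 0 ≤ D := by
    have := mul_nonneg hT0 hSignn
    rw [hD]; nlinarith [sq_nonneg (Mv N - S + T)]
  have hsq : Real.sqrt D ^ 2 = D := Real.sq_sqrt hDnn
  have habs : |Mv N - S + T| ≤ Real.sqrt D := by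
    rw [← Real.sqrt_sq_eq_abs]
    apply Real.sqrt_le_sqrt
    rw [hD]; nlinarith [mul_nonneg hT0 hSignn]
  set r : ℝ := (Mv N + S - T + Real.sqrt D) / 2 with hr
  rw [ge_iff_le]
  have hrMN : Mv N ≤ r := by
    have h1 := le_abs_self (Mv N - S + T)
    rw [hr]; linarith
  have hr0 : 0 ≤ r := le_trans hMv0 hrMN
  have hquad : (r - Mv N) * (r - (S - T)) = T * Sig0 := by
    rw [hr]
    linear_combination (1 / 4 : ℝ) * hsq + (1 / 4 : ℝ) * hD
  rcases le_or_gt r (S - T) with hcase | hcase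
  · -- r ≤ S - T ≤ S : use an indicator vector supported at i₀
    have hrS : r ≤ S := by linarith
    refine cw A hA r hr0 (fun j => if j = i₀ then 1 else 0)
      (fun i => by by_cases h : i = i₀ <;> simp [h]) i₀ (by simp) ?_
    intro i
    have hmv : A.mulVec (fun j => if j = i₀ then 1 else 0) i = A i i₀ := by
      simp [Matrix.mulVec, dotProduct, mul_ite]
    rw [hmv]
    by_cases hi : i = i₀
    · subst hi
      simpa using le_trans hrS hSi.le
    · simp only [hi, if_false, mul_zero]
      exact hA i i₀
  · -- main case: positive test vector
    have hβpos : 0 < r - (S - T) := by linarith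
    set y : Fin n → ℝ := fun j => c j * ((r - (S - T)) + (Mv j - Mv N)) with hy
    have hypos : ∀ j, 0 < y j := fun j => mul_pos (hc j) (by have := hMN j; linarith)
    refine cw A hA r hr0 y (fun i => (hypos i).le) ⟨0, hn⟩ (hypos _) ?_
    intro i
    have e1 : A.mulVec y i =
        (r - (S - T)) * (c i * Mv i) + ∑ j, A i j * c j * (Mv j - Mv N) := by
      simp only [Matrix.mulVec, dotProduct, hy]
      rw [← hsum i, Finset.mul_sum, ← Finset.sum_add_distrib]
      exact Finset.sum_congr rfl fun j _ => by ring
    have e2 : A i i * c i * (Mv i - Mv N) + T * c i * (Sig0 - (Mv i - Mv N)) ≤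
        ∑ j, A i j * c j * (Mv j - Mv N) := by
      have hsplit : ∑ j, A i j * c j * (Mv j - Mv N) =
          A i i * c i * (Mv i - Mv N) +
            ∑ j ∈ Finset.univ.erase i, A i j * c j * (Mv j - Mv N) := by
        rw [← Finset.add_sum_erase _ _ (Finset.mem_univ i)]
      rw [hsplit]
      have h8 : ∑ j ∈ Finset.univ.erase i, T * c i * (Mv j - Mv N) ≤
          ∑ j ∈ Finset.univ.erase i, A i j * c j * (Mv j - Mv N) := by
        refine Finset.sum_le_sum fun j hj => ?_
        have hij : i ≠ j := (Finset.mem_erase.mp hj).1.symm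
        exact mul_le_mul_of_nonneg_right (hTle i j hij) (by linarith [hMN j])
      have h9 : ∑ j ∈ Finset.univ.erase i, T * c i * (Mv j - Mv N) =
          T * c i * (Sig0 - (Mv i - Mv N)) := by
        rw [← Finset.mul_sum, Finset.sum_erase_eq_sub (Finset.mem_univ i), huniv]
      linarith [h8, h9.symm.le]
    have ekey : r * y i = (r - (S - T)) * (c i * Mv i) +
        (S * c i * (Mv i - Mv N) + T * c i * (Sig0 - (Mv i - Mv N))) := by
      simp only [hy]
      linear_combination (c i) * hquad
    have hdS : S * c i * (Mv i - Mv N) ≤ A i i * c i * (Mv i - Mv N) := by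
      have h10 := hSle i
      have h11 := hMN i
      nlinarith [mul_nonneg (mul_nonneg (sub_nonneg.mpr h10) (hc i).le) (sub_nonneg.mpr h11)]
    calc r * y i = (r - (S - T)) * (c i * Mv i) +
          (S * c i * (Mv i - Mv N) + T * c i * (Sig0 - (Mv i - Mv N))) := ekey
      _ ≤ (r - (S - T)) * (c i * Mv i) +
          (A i i * c i * (Mv i - Mv N) + T * c i * (Sig0 - (Mv i - Mv N))) := by linarith
      _ ≤ (r - (S - T)) * (c i * Mv i) + ∑ j, A i j * c j * (Mv j - Mv N) := by linarith
      _ = A.mulVec y i := e1.symm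
end

section
/- Let A be an n×n nonnegative irreducible matrix with row sums r₁ ≥ r₂ ≥ ... ≥ r_n. Let M = max_i a_{ii} and N = max_{i≠j} a_{ij}, and assume N > 0. Then for each 1 ≤ i ≤ n, ρ(A) ≤ (r_i + M − N + √((r_i − M + N)² + 4N·Σ_{k=1}^{i−1}(r_k − r_i)))/2. -/
open Matrix Finset Real

lemma foldr_max_le_aux (B : ℝ) (h0 : 0 ≤ B) :
    ∀ (s : Multiset ℝ), (∀ x ∈ s, x ≤ B) → s.foldr max 0 ≤ B := by
  intro s
  induction s using Multiset.induction_on with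
  | empty => intro _; simpa using h0
  | cons a t ih =>
      intro h
      rw [Multiset.foldr_cons]
      exact max_le (h _ (Multiset.mem_cons_self _ _))
        (ih fun x hx => h x (Multiset.mem_cons_of_mem hx))

lemma charpoly_eval_eq_det_aux {n : ℕ} (A : Matrix (Fin n) (Fin n) ℂ) (z : ℂ) :
    A.charpoly.eval z = (z • (1 : Matrix (Fin n) (Fin n) ℂ) - A).det := by
  rw [Matrix.charpoly, ← Polynomial.coe_evalRingHom, RingHom.map_det]
  congr 1
  ext i j
  by_cases h : i = j
  · subst h
    simp [Matrix.charmatrix_apply_eq, Matrix.one_apply_eq]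
  · simp [Matrix.charmatrix_apply_ne _ _ _ h, Matrix.one_apply_ne h]

theorem stmt_3 {n : ℕ} (A : Matrix (Fin n) (Fin n) ℝ)
    (hA : ∀ i j, 0 ≤ A i j) (hirr : Irred A)
    (r : Fin n → ℝ) (hr : ∀ i, r i = ∑ j, A i j)
    (M : ℝ) (hM : IsGreatest {x | ∃ i, x = A i i} M)
    (N : ℝ) (hN : IsGreatest {x | ∃ i j, i ≠ j ∧ x = A i j} N)
    (hord : ∀ i j : Fin n, i ≤ j → r j ≤ r i) (hNpos : 0 < N) :
    ∀ i : Fin n, specRad A ≤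
      (r i + M - N +
        Real.sqrt ((r i - M + N) ^ 2 + 4 * N * ∑ k ∈ Finset.Iio i, (r k - r i))) / 2 := by
  intro i
  obtain ⟨S, hSdef⟩ : ∃ S : ℝ, S = ∑ k ∈ Finset.Iio i, (r k - r i) := ⟨_, rfl⟩
  have hS0 : 0 ≤ S := by
    rw [hSdef]
    apply Finset.sum_nonneg
    intro k hk
    have hki : k ≤ i := le_of_lt (Finset.mem_Iio.mp hk)
    linarith [hord k i hki]
  obtain ⟨Δ, hΔdef⟩ : ∃ D : ℝ, D = (r i - M + N) ^ 2 + 4 * N * S := ⟨_, rfl⟩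
  have hΔ0 : 0 ≤ Δ := by
    have : 0 ≤ 4 * N * S := by positivity
    nlinarith [sq_nonneg (r i - M + N)]
  obtain ⟨B, hBdef⟩ : ∃ B : ℝ, B = (r i + M - N + Real.sqrt Δ) / 2 := ⟨_, rfl⟩
  have hsq : Real.sqrt Δ ^ 2 = Δ := Real.sq_sqrt hΔ0
  have hsqnn : 0 ≤ Real.sqrt Δ := Real.sqrt_nonneg Δ
  -- the zeroth index
  have hnpos : 0 < n := i.pos
  obtain ⟨z0, hz0def⟩ : ∃ z : Fin n, z = ⟨0, hnpos⟩ := ⟨_, rfl⟩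
  obtain ⟨l₀, hl₀⟩ := hM.1
  have hMr0 : M ≤ r z0 := by
    have h1 : A l₀ l₀ ≤ ∑ j, A l₀ j :=
      Finset.single_le_sum (fun k _ => hA l₀ k) (Finset.mem_univ l₀)
    have h2 : r l₀ ≤ r z0 := hord z0 l₀ (by simp [hz0def, Fin.le_def])
    rw [hl₀]
    rw [hr l₀] at h2
    linarith
  -- positivity of B - (M - N)
  have hcpos : 0 < B - (M - N) := by
    rcases lt_or_ge (M - N) (r i) with h1 | h1
    · rw [hBdef]; linarith
    · -- r i ≤ M - N forces S > 0 (and i ≠ z0)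
      have hSpos : 0 < S := by
        by_cases hi0 : z0 < i
        · have hz0mem : z0 ∈ Finset.Iio i := Finset.mem_Iio.mpr hi0
          have hterm : N ≤ r z0 - r i := by linarith
          have hle : r z0 - r i ≤ S := by
            rw [hSdef]
            apply Finset.single_le_sum (f := fun k => r k - r i)
              (fun k hk => by
                show 0 ≤ r k - r i
                linarith [hord k i (le_of_lt (Finset.mem_Iio.mp hk))]) hz0mem
          linarith
        · have : i = z0 := by
            have : z0 ≤ i := by simp [hz0def, Fin.le_def]
            exact le_antisymm (not_lt.mp hi0) this
          rw [this] at h1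
          linarith
      have h4 : (r i - M + N) ^ 2 < Δ := by
        rw [hΔdef]; nlinarith
      nlinarith [hsq, hsqnn]
  have hBri : r i ≤ B := by
    nlinarith [hsq, hsqnn, mul_nonneg (le_of_lt hNpos) hS0,
      sq_nonneg (Real.sqrt Δ - (r i - M + N)), sq_nonneg (Real.sqrt Δ + (r i - M + N))]
  have hri0 : 0 ≤ r i := by
    rw [hr i]; exact Finset.sum_nonneg fun k _ => hA i k
  have hB0 : 0 ≤ B := le_trans hri0 hBri
  have key : (B - r i) * (B - (M - N)) = N * S := by
    rw [hBdef]
    nlinarith [hsq]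
  -- the weight vector
  obtain ⟨w, hwdef⟩ : ∃ w : Fin n → ℝ, w = fun l => max (r l - r i) 0 := ⟨_, rfl⟩
  have hw0 : ∀ l, 0 ≤ w l := fun l => by rw [hwdef]; exact le_max_right _ _
  have hwge : ∀ l, r l - r i ≤ w l := fun l => by rw [hwdef]; exact le_max_left _ _
  have hwsum : ∑ l, w l = S := by
    rw [hSdef]
    rw [← Finset.sum_subset (Finset.subset_univ (Finset.Iio i))
      (fun x _ hx => by
        have hix : i ≤ x := not_lt.mp (fun h => hx (Finset.mem_Iio.mpr h))
        have := hord i x hix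
        simp only [hwdef]
        exact max_eq_right (by linarith))]
    apply Finset.sum_congr rfl
    intro k hk
    have := hord k i (le_of_lt (Finset.mem_Iio.mp hk))
    simp only [hwdef]
    exact max_eq_left (by linarith)
  obtain ⟨d, hddef⟩ : ∃ d : Fin n → ℝ, d = fun l => (B - (M - N)) + w l := ⟨_, rfl⟩
  have hd : ∀ l, 0 < d l := fun l => by
    rw [hddef]; exact add_pos_of_pos_of_nonneg hcpos (hw0 l)
  -- the key row computation
  have hrow : ∀ j, ∑ l, A j l * d l ≤ B * d j := by
    intro j
    have e1 : ∑ l, A j l * d l = (B - (M - N)) * r j + ∑ l, A j l * w l := by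
      have hterm : ∀ l ∈ Finset.univ, A j l * d l = A j l * (B - (M - N)) + A j l * w l :=
        fun l _ => by simp only [hddef]; ring
      rw [Finset.sum_congr rfl hterm, Finset.sum_add_distrib, ← Finset.sum_mul, ← hr j,
        mul_comm]
    have ew : ∑ l ∈ Finset.univ.erase j, w l = S - w j := by
      have := Finset.sum_erase_add Finset.univ w (Finset.mem_univ j)
      rw [hwsum] at this
      linarith
    have e2 : ∑ l, A j l * w l ≤ M * w j + N * (S - w j) := by
      rw [← Finset.sum_erase_add Finset.univ _ (Finset.mem_univ j)]
      have hterm : ∀ l ∈ Finset.univ.erase j, A j l * w l ≤ N * w l := by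
        intro l hl
        have hlj : l ≠ j := (Finset.mem_erase.mp hl).1
        have hAN : A j l ≤ N := hN.2 ⟨j, l, hlj.symm, rfl⟩
        exact mul_le_mul_of_nonneg_right hAN (hw0 l)
      have h1 : ∑ l ∈ Finset.univ.erase j, A j l * w l ≤ N * (S - w j) := by
        calc ∑ l ∈ Finset.univ.erase j, A j l * w l
            ≤ ∑ l ∈ Finset.univ.erase j, N * w l := Finset.sum_le_sum hterm
          _ = N * (S - w j) := by rw [← Finset.mul_sum, ew]
      have h2 : A j j * w j ≤ M * w j :=
        mul_le_mul_of_nonneg_right (hM.2 ⟨j, rfl⟩) (hw0 j)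
      linarith
    have h3 : (B - (M - N)) * (r j - r i) ≤ (B - (M - N)) * w j :=
      mul_le_mul_of_nonneg_left (hwge j) (le_of_lt hcpos)
    have e3 : (B - (M - N)) * r j + (M * w j + N * (S - w j)) ≤ B * d j := by
      simp only [hddef]
      nlinarith [key, h3]
    calc ∑ l, A j l * d l = (B - (M - N)) * r j + ∑ l, A j l * w l := e1
      _ ≤ (B - (M - N)) * r j + (M * w j + N * (S - w j)) := by linarith
      _ ≤ B * d j := e3
  -- now bound every root of the characteristic polynomial
  rw [← hSdef, ← hΔdef, ← hBdef]
  unfold specRad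
  apply foldr_max_le_aux B hB0
  intro x hx
  obtain ⟨z, hz, rfl⟩ := Multiset.mem_map.mp hx
  have hroot : ((A.map Complex.ofReal).charpoly).IsRoot z := (Polynomial.mem_roots'.mp hz).2
  have hdet : (z • (1 : Matrix (Fin n) (Fin n) ℂ) - A.map Complex.ofReal).det = 0 := by
    rw [← charpoly_eval_eq_det_aux]
    exact hroot
  obtain ⟨v, hv0, hveq⟩ := Matrix.exists_mulVec_eq_zero_iff.mpr hdet
  have hAv : (A.map Complex.ofReal) *ᵥ v = z • v := by
    rw [sub_mulVec] at hveq
    have h1 : (z • (1 : Matrix (Fin n) (Fin n) ℂ)) *ᵥ v = z • v := by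
      rw [smul_mulVec, one_mulVec]
    rw [h1] at hveq
    exact (sub_eq_zero.mp hveq).symm
  -- pick the index maximizing |v l| / d l
  obtain ⟨j, -, hj⟩ := Finset.exists_max_image Finset.univ
    (fun l => ‖v l‖ / d l) ⟨i, Finset.mem_univ i⟩
  have hvl : ∀ l, ‖v l‖ ≤ ‖v j‖ / d j * d l := by
    intro l
    exact (div_le_iff₀ (hd l)).mp (hj l (Finset.mem_univ l))
  have hvj : 0 < ‖v j‖ := by
    obtain ⟨l, hl⟩ := Function.ne_iff.mp hv0
    have h1 : 0 < ‖v l‖ := by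
      exact norm_pos_iff.mpr hl
    have h2 : 0 < ‖v j‖ / d j * d l := lt_of_lt_of_le h1 (hvl l)
    have h3 : 0 < ‖v j‖ / d j := by
      by_contra h
      push_neg at h
      have h4 : ‖v j‖ / d j * d l ≤ 0 :=
        mul_nonpos_of_nonpos_of_nonneg h (le_of_lt (hd l))
      linarith
    have := mul_pos h3 (hd j)
    rwa [div_mul_cancel₀ _ (ne_of_gt (hd j))] at this
  have hentry : ‖z‖ * ‖v j‖ ≤ ∑ l, A j l * ‖v l‖ := by
    have h1 : ‖z‖ * ‖v j‖ = ‖z * v j‖ := (norm_mul _ _).symm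
    have h2 : z * v j = ∑ l, (A.map Complex.ofReal) j l * v l := by
      have h := congrFun hAv j
      simp only [Matrix.mulVec, dotProduct, Pi.smul_apply, smul_eq_mul] at h
      exact h.symm
    rw [h1, h2]
    calc ‖∑ l, (A.map Complex.ofReal) j l * v l‖
        ≤ ∑ l, ‖(A.map Complex.ofReal) j l * v l‖ :=
          norm_sum_le _ _
      _ = ∑ l, A j l * ‖v l‖ := by
          apply Finset.sum_congr rfl
          intro l _
          rw [norm_mul]
          simp [Matrix.map_apply, Complex.norm_real, abs_of_nonneg (hA j l)]
  have hchain : ‖z‖ * ‖v j‖ ≤ B * ‖v j‖ := by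
    have hgnn : 0 ≤ ‖v j‖ / d j := div_nonneg (le_of_lt hvj) (le_of_lt (hd j))
    calc ‖z‖ * ‖v j‖
        ≤ ∑ l, A j l * ‖v l‖ := hentry
      _ ≤ ∑ l, A j l * (‖v j‖ / d j * d l) := by
          apply Finset.sum_le_sum
          intro l _
          exact mul_le_mul_of_nonneg_left (hvl l) (hA j l)
      _ = ‖v j‖ / d j * ∑ l, A j l * d l := by
          rw [Finset.mul_sum]
          apply Finset.sum_congr rfl
          intro l _
          ring
      _ ≤ ‖v j‖ / d j * (B * d j) :=
          mul_le_mul_of_nonneg_left (hrow j) hgnn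
      _ = B * (‖v j‖ / d j * d j) := by ring
      _ = B * ‖v j‖ := by rw [div_mul_cancel₀ _ (ne_of_gt (hd j))]
  exact le_of_mul_le_mul_right hchain hvj
end

section
/- Let G be a connected graph on n ≥ 2 vertices with degrees d₁ ≥ d₂ ≥ ... ≥ d_n. Then for each 1 ≤ i ≤ n, the spectral radius of the adjacency matrix satisfies ρ(A(G)) ≤ (d_i − 1 + √((d_i + 1)² + 4·Σ_{k=1}^{i−1}(d_k − d_i)))/2. -/
open Matrix Finset Real

theorem eig_exists {n : ℕ} (M : Matrix (Fin n) (Fin n) ℂ) (z : ℂ) (h : M.charpoly.IsRoot z) :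
    ∃ y ≠ 0, M.mulVec y = z • y := by
  have h1 : ((charmatrix M).map (Polynomial.eval z)).det = 0 := by
    have : (Polynomial.evalRingHom z) (charmatrix M).det = ((Polynomial.evalRingHom z).mapMatrix (charmatrix M)).det := RingHom.map_det _ _
    simpa [Matrix.charpoly] using this ▸ h
  have h2 : (charmatrix M).map (Polynomial.eval z) = z • (1 : Matrix (Fin n) (Fin n) ℂ) - M := by
    ext i j
    by_cases hij : i = j <;> simp [hij, charmatrix_apply, Matrix.one_apply, Matrix.smul_apply,
      Matrix.diagonal_apply]
  rw [h2] at h1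
  obtain ⟨y, hy0, hy⟩ := (Matrix.exists_mulVec_eq_zero_iff).2 h1
  refine ⟨y, hy0, ?_⟩
  rw [Matrix.sub_mulVec, Matrix.smul_mulVec, Matrix.one_mulVec, sub_eq_zero] at hy
  exact hy.symm

/-- Weighted Gershgorin-type bound for nonnegative real matrices. -/
theorem gersh {n : ℕ} (hn : 0 < n) (A : Matrix (Fin n) (Fin n) ℝ)
    (hA : ∀ v w, 0 ≤ A v w) (x : Fin n → ℝ) (hx : ∀ v, 0 < x v) (r : ℝ)
    (hr : ∀ v, ∑ w, A v w * x w ≤ r * x v) (z : ℂ)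
    (hz : (A.map Complex.ofReal).charpoly.IsRoot z) : ‖z‖ ≤ r := by
  obtain ⟨y, hy0, hy⟩ := eig_exists _ z hz
  have : Nonempty (Fin n) := ⟨⟨0, hn⟩⟩
  set g : Fin n → ℝ := fun w => ‖y w‖ / x w with hg
  obtain ⟨u, -, hu⟩ := Finset.exists_max_image Finset.univ g Finset.univ_nonempty
  have hgu : ∀ w, g w ≤ g u := fun w => hu w (Finset.mem_univ w)
  have hxne : ∀ v, x v ≠ 0 := fun v => (hx v).ne'
  have hyx : ∀ w, ‖y w‖ = g w * x w := by
    intro w; rw [hg]; rw [div_mul_cancel₀ _ (hxne w)]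
  have hyu : 0 < ‖y u‖ := by
    by_contra hcon
    push_neg at hcon
    have hu0 : ‖y u‖ = 0 := le_antisymm hcon (norm_nonneg _)
    apply hy0
    funext w
    have : g w ≤ 0 := by
      have := hgu w
      rw [hg] at *
      simp only at this ⊢
      rw [hu0] at this
      simpa using this
    have : ‖y w‖ ≤ 0 := by
      have := mul_le_mul_of_nonneg_right this (hx w).le
      rw [← hyx w] at this
      simpa using this
    simpa using le_antisymm this (norm_nonneg _)
  have hgupos : 0 < g u := by
    rw [hg]; exact div_pos hyu (hx u)
  -- main chain
  have key : ‖z‖ * ‖y u‖ ≤ r * ‖y u‖ := by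
    have h1 : ‖z‖ * ‖y u‖ =
        ‖((A.map Complex.ofReal).mulVec y) u‖ := by
      rw [hy]
      simp [Pi.smul_apply]
    have h2 : ‖((A.map Complex.ofReal).mulVec y) u‖ ≤
        ∑ w, A u w * ‖y w‖ := by
      rw [Matrix.mulVec, dotProduct]
      refine (norm_sum_le _ _).trans (le_of_eq ?_)
      refine Finset.sum_congr rfl fun w _ => ?_
      rw [norm_mul, Matrix.map_apply, Complex.norm_real, Real.norm_of_nonneg (hA u w)]
    have h3 : ∑ w, A u w * ‖y w‖ ≤ g u * (r * x u) := by
      calc ∑ w, A u w * ‖y w‖ = ∑ w, A u w * (g w * x w) := by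
            refine Finset.sum_congr rfl fun w _ => by rw [hyx w]
        _ ≤ ∑ w, A u w * (g u * x w) := by
            refine Finset.sum_le_sum fun w _ => ?_
            exact mul_le_mul_of_nonneg_left
              (mul_le_mul_of_nonneg_right (hgu w) (hx w).le) (hA u w)
        _ = g u * ∑ w, A u w * x w := by
            rw [Finset.mul_sum]; exact Finset.sum_congr rfl fun w _ => by ring
        _ ≤ g u * (r * x u) := mul_le_mul_of_nonneg_left (hr u) hgupos.le
    have h4 : g u * (r * x u) = r * ‖y u‖ := by
      rw [hyx u]; ring
    rw [h1]
    exact (h2.trans h3).trans_eq h4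
  exact le_of_mul_le_mul_right key hyu

theorem foldr_max_le (r : ℝ) (hr : 0 ≤ r) : ∀ (s : Multiset ℝ),
    (∀ a ∈ s, a ≤ r) → s.foldr max 0 ≤ r := by
  intro s
  induction s using Multiset.induction with
  | empty => intro _; simpa using hr
  | cons a t ih =>
    intro h
    rw [Multiset.foldr_cons]
    exact max_le (h a (Multiset.mem_cons_self a t))
      (ih fun b hb => h b (Multiset.mem_cons_of_mem hb))
theorem stmt_7 {n : ℕ} (hn : 2 ≤ n) (G : SimpleGraph (Fin n)) [DecidableRel G.Adj]
    (hconn : G.Connected)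
    (hord : ∀ i j : Fin n, i ≤ j → G.degree j ≤ G.degree i) :
    ∀ i : Fin n, specRad (G.adjMatrix ℝ) ≤
      ((G.degree i : ℝ) - 1 +
        Real.sqrt (((G.degree i : ℝ) + 1) ^ 2 +
          4 * ∑ k ∈ Finset.Iio i, ((G.degree k : ℝ) - (G.degree i : ℝ)))) / 2 := by
  intro i
  set d : Fin n → ℝ := fun v => (G.degree v : ℝ) with hd
  have hdmono : ∀ j k : Fin n, j ≤ k → d k ≤ d j := by
    intro j k hjk
    have := hord j k hjk
    rw [hd]
    dsimp only
    exact_mod_cast this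
  have hd0 : ∀ v, 0 ≤ d v := fun v => Nat.cast_nonneg _
  set S : ℝ := ∑ k ∈ Finset.Iio i, (d k - d i) with hSdef
  have hS : 0 ≤ S := by
    refine Finset.sum_nonneg fun k hk => ?_
    have : k < i := Finset.mem_Iio.mp hk
    linarith [hdmono k i this.le]
  set s : ℝ := Real.sqrt ((d i + 1) ^ 2 + 4 * S) with hsdef
  have hs0 : 0 ≤ s := Real.sqrt_nonneg _
  have hs2 : s ^ 2 = (d i + 1) ^ 2 + 4 * S := by
    rw [hsdef]
    exact Real.sq_sqrt (by positivity)
  have hs1 : d i + 1 ≤ s := by nlinarith [hd0 i]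
  set φ : ℝ := (d i - 1 + s) / 2 with hφdef
  have hφd : d i ≤ φ := by rw [hφdef]; linarith
  have hφ0 : 0 ≤ φ := le_trans (hd0 i) hφd
  have hφ1 : (0:ℝ) < φ + 1 := by linarith
  have h2φ : 2 * φ = d i - 1 + s := by rw [hφdef]; ring
  have hquad : φ ^ 2 = (d i - 1) * φ + (d i + S) := by nlinarith [hs2, h2φ]
  -- excess function
  set e : Fin n → ℝ := fun v => max (d v - d i) 0 with hedef
  have he0 : ∀ v, 0 ≤ e v := fun v => le_max_right _ _
  have heOut : ∀ v : Fin n, ¬ v < i → e v = 0 := by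
    intro v hv
    have : d v ≤ d i := hdmono i v (not_lt.mp hv)
    simp [hedef, max_eq_right, sub_nonpos.mpr this]
  have heIio : ∀ k ∈ Finset.Iio i, e k = d k - d i := by
    intro k hk
    have : d i ≤ d k := hdmono k i (Finset.mem_Iio.mp hk).le
    simp [hedef, max_eq_left, sub_nonneg.mpr this]
  have hSsum : ∑ v, e v = S := by
    rw [hSdef, ← Finset.sum_congr rfl heIio]
    exact (Finset.sum_subset (Finset.subset_univ _)
      (fun v _ hv => heOut v (by simpa using hv))).symm
  -- weights
  set x : Fin n → ℝ := fun v => 1 + e v / (φ + 1) with hxdef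
  have hx : ∀ v, 0 < x v := by
    intro v
    have : 0 ≤ e v / (φ + 1) := div_nonneg (he0 v) hφ1.le
    rw [hxdef]; dsimp only; linarith
  -- row sum bound
  have hrow : ∀ v, ∑ w, (G.adjMatrix ℝ) v w * x w ≤ φ * x v := by
    intro v
    have hmv : ∑ w, (G.adjMatrix ℝ) v w * x w = ∑ w ∈ G.neighborFinset v, x w := by
      have := G.adjMatrix_mulVec_apply (α := ℝ) v x
      simpa [Matrix.mulVec, dotProduct] using this
    have hsub : G.neighborFinset v ⊆ Finset.univ.erase v := by
      intro w hw
      rw [SimpleGraph.mem_neighborFinset] at hw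
      exact Finset.mem_erase.mpr ⟨hw.ne', Finset.mem_univ w⟩
    have hT : ∑ w ∈ G.neighborFinset v, e w ≤ S - e v := by
      have h1 : ∑ w ∈ G.neighborFinset v, e w ≤ ∑ w ∈ Finset.univ.erase v, e w :=
        Finset.sum_le_sum_of_subset_of_nonneg hsub (fun w _ _ => he0 w)
      have h2 : ∑ w ∈ Finset.univ.erase v, e w = S - e v := by
        have := Finset.add_sum_erase Finset.univ e (Finset.mem_univ v)
        rw [hSsum] at this
        linarith
      linarith
    have hcard : ∑ w ∈ G.neighborFinset v, (1:ℝ) = d v := by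
      rw [Finset.sum_const, nsmul_eq_mul, mul_one, hd]
      simp [SimpleGraph.card_neighborFinset_eq_degree]
    have hsplit : ∑ w ∈ G.neighborFinset v, x w
        = d v + (∑ w ∈ G.neighborFinset v, e w) / (φ + 1) := by
      rw [hxdef]
      dsimp only
      rw [Finset.sum_add_distrib, hcard, Finset.sum_div]
    have hdv : d v ≤ d i + e v := by
      have : d v - d i ≤ e v := le_max_left _ _
      linarith
    have hkey : d i + e v + (S - e v) / (φ + 1) = φ * x v := by
      rw [hxdef]
      dsimp only
      field_simp
      nlinarith [hquad]
    rw [hmv, hsplit]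
    have : (∑ w ∈ G.neighborFinset v, e w) / (φ + 1) ≤ (S - e v) / (φ + 1) :=
      div_le_div_of_nonneg_right ?_ hφ1.le
    · linarith [hkey]
    · exact hT
  -- conclude via Gershgorin
  have hnpos : 0 < n := lt_of_lt_of_le (by norm_num) hn
  have hAnn : ∀ v w, 0 ≤ (G.adjMatrix ℝ) v w := by
    intro v w
    by_cases h : G.Adj v w <;> simp [h]
  unfold specRad
  refine foldr_max_le φ hφ0 _ ?_
  intro a ha
  obtain ⟨z, hz, rfl⟩ := Multiset.mem_map.mp ha
  have hroot : ((G.adjMatrix ℝ).map Complex.ofReal).charpoly.IsRoot z :=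
    (Polynomial.mem_roots'.mp hz).2
  exact gersh hnpos _ hAnn x hx φ hrow z hroot
end

section
/- Let G be a connected graph on n ≥ 2 vertices with average degrees m₁ ≥ m₂ ≥ ... ≥ m_n, where m_i = (Σ_{j∼i} d_j)/d_i, and let N = max_{i∼j} d_j/d_i. Then for each 1 ≤ i ≤ n, ρ(A(G)) ≤ (m_i − N + √((m_i + N)² + 4N·Σ_{k=1}^{i−1}(m_k − m_i)))/2, with equality if and only if m₁ = m₂ = ... = m_n (i.e., G is pseudo-regular). -/
open Matrix Finset Real

lemma my_foldr_le {s : Multiset ℝ} {b B : ℝ} (hb : b ≤ B) (h : ∀ x ∈ s, x ≤ B) :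
    s.foldr max b ≤ B := by
  induction s using Multiset.induction with
  | empty => simpa using hb
  | cons a s ih =>
    rw [Multiset.foldr_cons]
    exact max_le (h a (Multiset.mem_cons_self a s))
      (ih fun x hx => h x (Multiset.mem_cons_of_mem hx))

lemma my_le_foldr {s : Multiset ℝ} {b x : ℝ} (h : x ∈ s) : x ≤ s.foldr max b := by
  induction s using Multiset.induction with
  | empty => simp at h
  | cons a s ih =>
    rw [Multiset.foldr_cons]
    rcases Multiset.mem_cons.1 h with h | h
    · subst h; exact le_max_left _ _
    · exact le_trans (ih h) (le_max_right _ _)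

lemma my_foldr_mem (s : Multiset ℝ) (b : ℝ) : s.foldr max b ∈ s ∨ s.foldr max b = b := by
  induction s using Multiset.induction with
  | empty => right; simp
  | cons a s ih =>
    rw [Multiset.foldr_cons]
    rcases max_choice a (s.foldr max b) with h | h
    · left; rw [h]; exact Multiset.mem_cons_self a s
    · rw [h]
      rcases ih with h2 | h2
      · left; exact Multiset.mem_cons_of_mem h2
      · right; exact h2

lemma my_eval_charpoly {k : ℕ} (M : Matrix (Fin k) (Fin k) ℂ) (z : ℂ) :
    M.charpoly.eval z = (z • (1 : Matrix (Fin k) (Fin k) ℂ) - M).det := by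
  rw [Matrix.charpoly, ← Polynomial.coe_evalRingHom, RingHom.map_det]
  congr 1
  ext i j
  by_cases h : i = j
  · subst h
    simp [Matrix.charmatrix_apply_eq, Matrix.sub_apply, Matrix.smul_apply, Matrix.one_apply]
  · simp [Matrix.charmatrix_apply_ne _ _ _ h, Matrix.sub_apply, Matrix.smul_apply,
      Matrix.one_apply_ne h]

lemma my_root_iff_eig {k : ℕ} (M : Matrix (Fin k) (Fin k) ℂ) (z : ℂ) :
    z ∈ M.charpoly.roots ↔ ∃ v, v ≠ 0 ∧ M.mulVec v = z • v := by
  rw [Polynomial.mem_roots (M.charpoly_monic.ne_zero), Polynomial.IsRoot, my_eval_charpoly]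
  rw [← Matrix.exists_mulVec_eq_zero_iff]
  constructor
  · rintro ⟨v, hv, hmv⟩
    refine ⟨v, hv, ?_⟩
    rw [Matrix.sub_mulVec, sub_eq_zero, Matrix.smul_mulVec, Matrix.one_mulVec] at hmv
    exact hmv.symm
  · rintro ⟨v, hv, hmv⟩
    refine ⟨v, hv, ?_⟩
    rw [Matrix.sub_mulVec, sub_eq_zero, Matrix.smul_mulVec, Matrix.one_mulVec]
    exact hmv.symm

lemma my_walk_prop {V : Type*} {G : SimpleGraph V} (P : V → Prop)
    (step : ∀ a b, G.Adj a b → P a → P b) {x y : V} (w : G.Walk x y) (hx : P x) : P y := by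
  induction w with
  | nil => exact hx
  | cons h p ih => exact ih (step _ _ h hx)

lemma my_map_adjMatrix {n : ℕ} (G : SimpleGraph (Fin n)) [DecidableRel G.Adj] :
    (G.adjMatrix ℝ).map (Complex.ofReal) = G.adjMatrix ℂ := by
  ext i j
  simp [Matrix.map_apply, SimpleGraph.adjMatrix_apply]
  split <;> simp

section
variable {n : ℕ} (G : SimpleGraph (Fin n)) [DecidableRel G.Adj]

lemma my_eig_key (v : Fin n → ℂ) (z : ℂ)
    (hmv : (G.adjMatrix ℂ).mulVec v = z • v) (k : Fin n) :
    ‖z‖ * ‖v k‖ ≤ ∑ j ∈ G.neighborFinset k, ‖v j‖ := by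
  have hk := congrFun hmv k
  rw [SimpleGraph.adjMatrix_mulVec_apply] at hk
  rw [← norm_mul]
  calc ‖z * v k‖ = ‖∑ j ∈ G.neighborFinset k, v j‖ := by
        congr 1
        rw [hk, Pi.smul_apply, smul_eq_mul]
    _ ≤ ∑ j ∈ G.neighborFinset k, ‖v j‖ :=
        norm_sum_le _ _

lemma my_specRad_le (u : Fin n → ℝ) (hu : ∀ k, 0 < u k) {B : ℝ} (hB : 0 ≤ B)
    (hrow : ∀ k, ∑ j ∈ G.neighborFinset k, u j ≤ B * u k) :
    specRad (G.adjMatrix ℝ) ≤ B := by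
  apply my_foldr_le hB
  intro x hx
  obtain ⟨z, hz, rfl⟩ := Multiset.mem_map.1 hx
  rw [my_map_adjMatrix] at hz
  obtain ⟨v, hv, hmv⟩ := (my_root_iff_eig _ z).1 hz
  obtain ⟨kx, hkx⟩ : ∃ k, v k ≠ 0 := by
    by_contra h; push_neg at h; exact hv (funext h)
  obtain ⟨k0, -, hk0⟩ := Finset.exists_max_image Finset.univ
      (fun k => ‖v k‖ / u k) ⟨kx, Finset.mem_univ kx⟩
  set W : ℝ := ‖v k0‖ / u k0 with hWdef
  have hW : 0 < W := by
    have h1 := hk0 kx (Finset.mem_univ kx)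
    have h2 : 0 < ‖v kx‖ / u kx :=
      div_pos (by simpa using hkx) (hu kx)
    exact lt_of_lt_of_le h2 h1
  have hle : ∀ j, ‖v j‖ ≤ W * u j := by
    intro j
    have := hk0 j (Finset.mem_univ j)
    rw [div_le_iff₀ (hu j)] at this
    linarith [this]
  have hvk0 : ‖v k0‖ = W * u k0 := by
    rw [hWdef, div_mul_cancel₀ _ (hu k0).ne']
  have chain : ‖z‖ * (W * u k0) ≤ W * (B * u k0) := by
    calc ‖z‖ * (W * u k0) = ‖z‖ * ‖v k0‖ := by rw [hvk0]
      _ ≤ ∑ j ∈ G.neighborFinset k0, ‖v j‖ := my_eig_key G v z hmv k0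
      _ ≤ ∑ j ∈ G.neighborFinset k0, W * u j := Finset.sum_le_sum fun j _ => hle j
      _ = W * ∑ j ∈ G.neighborFinset k0, u j := by rw [Finset.mul_sum]
      _ ≤ W * (B * u k0) := mul_le_mul_of_nonneg_left (hrow k0) hW.le
  nlinarith [mul_pos hW (hu k0)]

lemma my_rows_eq (hconn : G.Connected) (u : Fin n → ℝ) (hu : ∀ k, 0 < u k) {B : ℝ}
    (hB : 0 < B)
    (hrow : ∀ k, ∑ j ∈ G.neighborFinset k, u j ≤ B * u k)
    (hspec : specRad (G.adjMatrix ℝ) = B) :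
    ∀ k, ∑ j ∈ G.neighborFinset k, u j = B * u k := by
  obtain ⟨z, hz, hzB⟩ : ∃ z ∈ ((G.adjMatrix ℝ).map Complex.ofReal).charpoly.roots,
      ‖z‖ = B := by
    have h : specRad (G.adjMatrix ℝ) ∈
        ((((G.adjMatrix ℝ).map Complex.ofReal).charpoly.roots).map
          (fun z => ‖z‖)) ∨ specRad (G.adjMatrix ℝ) = 0 :=
      my_foldr_mem _ 0
    rw [hspec] at h
    rcases h with h | h
    · obtain ⟨z, hmem, habs⟩ := Multiset.mem_map.1 h
      exact ⟨z, hmem, habs⟩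
    · exact absurd h hB.ne'
  rw [my_map_adjMatrix] at hz
  obtain ⟨v, hv, hmv⟩ := (my_root_iff_eig _ z).1 hz
  obtain ⟨kx, hkx⟩ : ∃ k, v k ≠ 0 := by
    by_contra h; push_neg at h; exact hv (funext h)
  obtain ⟨k0, -, hk0⟩ := Finset.exists_max_image Finset.univ
      (fun k => ‖v k‖ / u k) ⟨kx, Finset.mem_univ kx⟩
  set W : ℝ := ‖v k0‖ / u k0 with hWdef
  have hW : 0 < W := by
    have h1 := hk0 kx (Finset.mem_univ kx)
    have h2 : 0 < ‖v kx‖ / u kx :=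
      div_pos (by simpa using hkx) (hu kx)
    exact lt_of_lt_of_le h2 h1
  have hle : ∀ j, ‖v j‖ ≤ W * u j := by
    intro j
    have := hk0 j (Finset.mem_univ j)
    rw [div_le_iff₀ (hu j)] at this
    linarith [this]
  have hvk0 : ‖v k0‖ = W * u k0 := by
    rw [hWdef, div_mul_cancel₀ _ (hu k0).ne']
  -- propagation
  have step : ∀ a b, G.Adj a b → (W * u a ≤ ‖v a‖) →
      (W * u b ≤ ‖v b‖) := by
    intro a b hab hPa
    have hva : ‖v a‖ = W * u a := le_antisymm (hle a) hPa
    have c1 : B * (W * u a) ≤ ∑ j ∈ G.neighborFinset a, ‖v j‖ := by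
      rw [← hzB, ← hva]; exact my_eig_key G v z hmv a
    have c2 : ∑ j ∈ G.neighborFinset a, ‖v j‖ ≤
        ∑ j ∈ G.neighborFinset a, W * u j := Finset.sum_le_sum fun j _ => hle j
    have c3 : ∑ j ∈ G.neighborFinset a, W * u j ≤ B * (W * u a) := by
      rw [← Finset.mul_sum]
      calc W * ∑ j ∈ G.neighborFinset a, u j ≤ W * (B * u a) :=
            mul_le_mul_of_nonneg_left (hrow a) hW.le
        _ = B * (W * u a) := by ring
    have heq : ∀ j ∈ G.neighborFinset a, ‖v j‖ = W * u j := by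
      have hsum : ∑ j ∈ G.neighborFinset a, ‖v j‖ =
          ∑ j ∈ G.neighborFinset a, W * u j := le_antisymm c2 (by linarith)
      exact (Finset.sum_eq_sum_iff_of_le fun j _ => hle j).1 hsum
    have hb : b ∈ G.neighborFinset a := (SimpleGraph.mem_neighborFinset _ _ _).2 hab
    exact le_of_eq (heq b hb).symm
  have allP : ∀ k, ‖v k‖ = W * u k := by
    intro k
    obtain ⟨w⟩ := hconn.preconnected k0 k
    exact le_antisymm (hle k) (my_walk_prop _ step w (le_of_eq hvk0.symm))
  intro k
  refine le_antisymm (hrow k) ?_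
  have c1 : B * (W * u k) ≤ ∑ j ∈ G.neighborFinset k, ‖v j‖ := by
    rw [← hzB, ← allP k]; exact my_eig_key G v z hmv k
  have c2 : ∑ j ∈ G.neighborFinset k, ‖v j‖ =
      W * ∑ j ∈ G.neighborFinset k, u j := by
    rw [Finset.mul_sum]
    exact Finset.sum_congr rfl fun j _ => allP j
  have : B * (W * u k) ≤ W * ∑ j ∈ G.neighborFinset k, u j := by rw [← c2]; exact c1
  nlinarith [hW]


lemma my_specRad_ge (x : Fin n → ℝ) (hx : x ≠ 0) {μ : ℝ} (hμ : 0 ≤ μ)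
    (h : ∀ k, ∑ j ∈ G.neighborFinset k, x j = μ * x k) :
    μ ≤ specRad (G.adjMatrix ℝ) := by
  have hroot : (μ : ℂ) ∈ ((G.adjMatrix ℝ).map Complex.ofReal).charpoly.roots := by
    rw [my_map_adjMatrix]
    apply (my_root_iff_eig _ _).2
    refine ⟨fun k => (x k : ℂ), ?_, ?_⟩
    · intro hzero
      apply hx
      funext k
      have := congrFun hzero k
      simpa using this
    · funext k
      rw [SimpleGraph.adjMatrix_mulVec_apply, Pi.smul_apply, smul_eq_mul]
      exact_mod_cast h k
  have hmem : ‖(μ : ℂ)‖ ∈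
      (((G.adjMatrix ℝ).map Complex.ofReal).charpoly.roots).map
        (fun z => ‖z‖) :=
    Multiset.mem_map_of_mem _ hroot
  have hle := my_le_foldr (b := (0:ℝ)) hmem
  rw [Complex.norm_real, Real.norm_eq_abs, abs_of_nonneg hμ] at hle
  exact hle

end

set_option maxHeartbeats 1600000

theorem stmt_9 {n : ℕ} (hn : 2 ≤ n) (G : SimpleGraph (Fin n)) [DecidableRel G.Adj]
    (hconn : G.Connected)
    (m : Fin n → ℝ)
    (hm : ∀ i, m i = (∑ j ∈ G.neighborFinset i, (G.degree j : ℝ)) / (G.degree i : ℝ))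
    (hord : ∀ i j : Fin n, i ≤ j → m j ≤ m i)
    (N : ℝ) (hN : IsGreatest {x | ∃ i j, G.Adj i j ∧ x = (G.degree j : ℝ) / (G.degree i : ℝ)} N) :
    ∀ i : Fin n,
      specRad (G.adjMatrix ℝ) ≤
        (m i - N +
          Real.sqrt ((m i + N) ^ 2 + 4 * N * ∑ k ∈ Finset.Iio i, (m k - m i))) / 2 ∧
      (specRad (G.adjMatrix ℝ) =
        (m i - N +
          Real.sqrt ((m i + N) ^ 2 + 4 * N * ∑ k ∈ Finset.Iio i, (m k - m i))) / 2 ↔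
        ∀ j k : Fin n, m j = m k) := by
  intro i
  haveI : Nontrivial (Fin n) := Fin.nontrivial_iff_two_le.2 hn
  haveI : NeZero n := ⟨by omega⟩
  set d : Fin n → ℝ := fun k => (G.degree k : ℝ) with hd_def
  -- every vertex has a neighbor
  have hadj : ∀ k : Fin n, ∃ j, G.Adj k j := by
    intro k
    obtain ⟨j, hj⟩ := exists_ne k
    obtain ⟨w⟩ := hconn.preconnected k j
    cases w with
    | nil => exact absurd rfl hj
    | cons h p => exact ⟨_, h⟩
  have hdeg1 : ∀ k, 1 ≤ G.degree k := by
    intro k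
    exact (SimpleGraph.degree_pos_iff_exists_adj G k).2 (hadj k)
  have hd1 : ∀ k, (1 : ℝ) ≤ d k := by
    intro k
    simp only [hd_def]
    exact_mod_cast hdeg1 k
  have hdpos : ∀ k, (0 : ℝ) < d k := fun k => lt_of_lt_of_le one_pos (hd1 k)
  have hsum : ∀ k, ∑ j ∈ G.neighborFinset k, d j = m k * d k := by
    intro k
    rw [hm k, show ((G.degree k : ℝ)) = d k from rfl, div_mul_cancel₀ _ (hdpos k).ne']
  have hdN : ∀ a b : Fin n, G.Adj a b → d b ≤ N * d a := by
    intro a b hab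
    have h := hN.2 ⟨a, b, hab, rfl⟩
    rw [div_le_iff₀ (hdpos a)] at h
    linarith
  have hN1 : 1 ≤ N := by
    obtain ⟨j, hj⟩ := hadj i
    have h1 := hdN i j hj
    have h2 := hdN j i hj.symm
    nlinarith [hdpos i, hdpos j, hd1 i, hd1 j]
  have hm1 : ∀ k, 1 ≤ m k := by
    intro k
    have h1 : d k ≤ ∑ j ∈ G.neighborFinset k, d j := by
      have : ∑ j ∈ G.neighborFinset k, (1 : ℝ) ≤ ∑ j ∈ G.neighborFinset k, d j :=
        Finset.sum_le_sum fun j _ => hd1 j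
      rwa [Finset.sum_const, SimpleGraph.card_neighborFinset_eq_degree, nsmul_eq_mul,
        mul_one] at this
    rw [hsum k] at h1
    nlinarith [hdpos k]
  set S : ℝ := ∑ k ∈ Finset.Iio i, (m k - m i) with hS_def
  clear_value S
  have hS0 : 0 ≤ S := by
    rw [hS_def]
    apply Finset.sum_nonneg
    intro k hk
    have : k ≤ i := le_of_lt (Finset.mem_Iio.1 hk)
    linarith [hord k i this]
  set s : ℝ := Real.sqrt ((m i + N) ^ 2 + 4 * N * S) with hs_def
  clear_value s
  set B : ℝ := (m i - N + s) / 2 with hB_def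
  clear_value B
  have hmiN : 0 ≤ m i + N := by linarith [hm1 i]
  have hdisc : (m i + N) ^ 2 ≤ (m i + N) ^ 2 + 4 * N * S := by nlinarith
  have hsqrtge : m i + N ≤ s := by
    rw [hs_def]
    calc m i + N = Real.sqrt ((m i + N) ^ 2) := (Real.sqrt_sq hmiN).symm
      _ ≤ _ := Real.sqrt_le_sqrt hdisc
  have hBm : m i ≤ B := by rw [hB_def]; linarith
  have hBpos : 0 < B := lt_of_lt_of_le (lt_of_lt_of_le one_pos (hm1 i)) hBm
  have hBsq : B ^ 2 = (m i - N) * B + N * (m i) + N * S := by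
    have h2B : 2 * B - (m i - N) = s := by rw [hB_def]; ring
    have hs2 : s ^ 2 = (m i + N) ^ 2 + 4 * N * S := by
      rw [hs_def]
      exact Real.sq_sqrt (le_trans (sq_nonneg _) hdisc)
    linear_combination ((2 * B - (m i - N) + s) / 4) * h2B + (1 / 4) * hs2
  have hBN : 0 < B + N := by linarith
  set c : ℝ := 1 / (B + N) with hc_def
  clear_value c
  have hcpos : 0 < c := by rw [hc_def]; positivity
  have hc1 : c * N + c * B = 1 := by rw [hc_def]; field_simp; ring
  have hcNS : c * (N * S) = B - m i := by
    have h : N * S = (B + N) * (B - m i) := by linear_combination -hBsq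
    rw [h, hc_def]
    field_simp
  set f : Fin n → ℝ := fun j => if j < i then m j - m i else 0 with hf_def
  clear_value f
  have hf0 : ∀ j, 0 ≤ f j := by
    intro j
    rw [hf_def]
    dsimp only
    split
    · next h => linarith [hord j i (le_of_lt h)]
    · exact le_refl 0
  have hfS : ∑ j, f j = S := by
    rw [hS_def, hf_def]
    rw [Finset.sum_ite, Finset.sum_const, smul_zero, add_zero]
    apply Finset.sum_congr _ (fun _ _ => rfl)
    ext j
    simp [Finset.mem_Iio]
  set u : Fin n → ℝ := fun j => d j * (1 + c * f j) with hu_def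
  clear_value u
  have hupos : ∀ j, 0 < u j := by
    intro j
    rw [hu_def]
    dsimp only
    apply mul_pos (hdpos j)
    have := hf0 j
    nlinarith
  have hexpand : ∀ k, ∑ j ∈ G.neighborFinset k, u j
      = m k * d k + c * ∑ j ∈ G.neighborFinset k, d j * f j := by
    intro k
    rw [hu_def]
    dsimp only
    rw [← hsum k, Finset.mul_sum, ← Finset.sum_add_distrib]
    apply Finset.sum_congr rfl
    intro j _
    ring
  have hterm : ∀ k, ∑ j ∈ G.neighborFinset k, d j * f j ≤ N * d k * (S - f k) := by
    intro k
    have h1 : ∑ j ∈ G.neighborFinset k, d j * f j ≤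
        ∑ j ∈ G.neighborFinset k, N * d k * f j := by
      apply Finset.sum_le_sum
      intro j hj
      have hadjj : G.Adj k j := (SimpleGraph.mem_neighborFinset _ _ _).1 hj
      exact mul_le_mul_of_nonneg_right (hdN k j hadjj) (hf0 j)
    have hsub : G.neighborFinset k ⊆ Finset.univ.erase k := by
      intro j hj
      rw [Finset.mem_erase]
      have hadjj : G.Adj k j := (SimpleGraph.mem_neighborFinset _ _ _).1 hj
      exact ⟨(hadjj.ne).symm, Finset.mem_univ j⟩
    have h2 : ∑ j ∈ G.neighborFinset k, N * d k * f j ≤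
        ∑ j ∈ Finset.univ.erase k, N * d k * f j := by
      apply Finset.sum_le_sum_of_subset_of_nonneg hsub
      intro j _ _
      have := hf0 j
      have : 0 ≤ N * d k := by nlinarith [hdpos k]
      positivity
    have h3 : ∑ j ∈ Finset.univ.erase k, N * d k * f j = N * d k * (S - f k) := by
      rw [← Finset.mul_sum]
      congr 1
      rw [← hfS]
      rw [← Finset.sum_erase_add Finset.univ f (Finset.mem_univ k)]
      ring
    linarith
  have hident : ∀ k, m k * d k + c * (N * d k * (S - f k)) - B * u k
      = d k * (m k - m i - f k) := by
    intro k
    rw [hu_def]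
    dsimp only
    linear_combination (d k) * hcNS - (d k * f k) * hc1
  have hklt : ∀ k, m k - m i - f k ≤ 0 := by
    intro k
    rw [hf_def]
    dsimp only
    split
    · linarith
    · next h =>
      have : i ≤ k := not_lt.1 h
      linarith [hord i k this]
  have hrowB : ∀ k, ∑ j ∈ G.neighborFinset k, u j ≤ B * u k := by
    intro k
    have h1 := hexpand k
    have h2 := hterm k
    have h3 := hident k
    have h4 := hklt k
    have h5 : c * ∑ j ∈ G.neighborFinset k, d j * f j ≤ c * (N * d k * (S - f k)) :=
      mul_le_mul_of_nonneg_left h2 hcpos.le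
    nlinarith [hdpos k]
  constructor
  · exact my_specRad_le G u hupos hBpos.le hrowB
  constructor
  · -- equality implies pseudo-regular
    intro hEq
    by_contra hnall
    push_neg at hnall
    obtain ⟨a, b, hab⟩ := hnall
    have hfj : ∀ j, f j = if j < i then m j - m i else 0 := fun j => by rw [hf_def]
    have hre := my_rows_eq G hconn u hupos hBpos hrowB hEq
    have hA12 : ∀ k, m k = m i + f k ∧
        ∑ j ∈ G.neighborFinset k, d j * f j = N * d k * (S - f k) := by
      intro k
      have e' : m k * d k + c * ∑ j ∈ G.neighborFinset k, d j * f j = B * u k := by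
        rw [← hexpand k]; exact hre k
      have h0 : d k * (m k - m i - f k)
          = c * (N * d k * (S - f k) - ∑ j ∈ G.neighborFinset k, d j * f j) := by
        linear_combination e' - hident k
      have hle1 : d k * (m k - m i - f k) ≤ 0 :=
        mul_nonpos_of_nonneg_of_nonpos (hdpos k).le (hklt k)
      have hge1 : 0 ≤ c * (N * d k * (S - f k) - ∑ j ∈ G.neighborFinset k, d j * f j) :=
        mul_nonneg hcpos.le (by linarith [hterm k])
      have hz : d k * (m k - m i - f k) = 0 := le_antisymm hle1 (by rw [h0]; exact hge1)
      constructor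
      · rcases mul_eq_zero.1 hz with h | h
        · exact absurd h (hdpos k).ne'
        · linarith
      · have hz2 : c * (N * d k * (S - f k) - ∑ j ∈ G.neighborFinset k, d j * f j) = 0 := by
          rw [← h0]; exact hz
        rcases mul_eq_zero.1 hz2 with h | h
        · exact absurd h hcpos.ne'
        · linarith
    have hA1 : ∀ k, m k = m i + f k := fun k => (hA12 k).1
    have hA2 : ∀ k, ∑ j ∈ G.neighborFinset k, d j * f j = N * d k * (S - f k) :=
      fun k => (hA12 k).2
    have hPadj : ∀ k j, j ≠ k → 0 < f j → G.Adj k j ∧ d j = N * d k := by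
      intro k j hjk hfjpos
      have hsub : G.neighborFinset k ⊆ Finset.univ.erase k := by
        intro x hx
        rw [Finset.mem_erase]
        exact ⟨((SimpleGraph.mem_neighborFinset _ _ _).1 hx).ne', Finset.mem_univ x⟩
      have h1le : ∀ x ∈ G.neighborFinset k, d x * f x ≤ N * d k * f x := by
        intro x hx
        exact mul_le_mul_of_nonneg_right
          (hdN k x ((SimpleGraph.mem_neighborFinset _ _ _).1 hx)) (hf0 x)
      have h3 : ∑ x ∈ Finset.univ.erase k, N * d k * f x = N * d k * (S - f k) := by
        rw [← Finset.mul_sum]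
        congr 1
        rw [← hfS, ← Finset.sum_erase_add Finset.univ f (Finset.mem_univ k)]
        ring
      have h2 : ∑ x ∈ G.neighborFinset k, N * d k * f x ≤
          ∑ x ∈ Finset.univ.erase k, N * d k * f x := by
        apply Finset.sum_le_sum_of_subset_of_nonneg hsub
        intro x _ _
        exact mul_nonneg (mul_nonneg (by linarith : (0:ℝ) ≤ N) (hdpos k).le) (hf0 x)
      have hchain : ∑ x ∈ G.neighborFinset k, d x * f x ≤
          ∑ x ∈ G.neighborFinset k, N * d k * f x := Finset.sum_le_sum h1le
      have hEq1 : ∑ x ∈ G.neighborFinset k, N * d k * f x =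
          ∑ x ∈ Finset.univ.erase k, N * d k * f x := by
        linarith [hchain, h2, h3, hA2 k]
      have hEq0 : ∑ x ∈ G.neighborFinset k, d x * f x =
          ∑ x ∈ G.neighborFinset k, N * d k * f x := by
        linarith [hA2 k, h3, hEq1]
      have hjmem : j ∈ G.neighborFinset k := by
        by_contra hjn
        have hsd : ∑ x ∈ Finset.univ.erase k \ G.neighborFinset k, N * d k * f x
            + ∑ x ∈ G.neighborFinset k, N * d k * f x
            = ∑ x ∈ Finset.univ.erase k, N * d k * f x :=
          Finset.sum_sdiff hsub
        have hnn : ∀ x ∈ Finset.univ.erase k \ G.neighborFinset k, 0 ≤ N * d k * f x := by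
          intro x _
          exact mul_nonneg (mul_nonneg (by linarith : (0:ℝ) ≤ N) (hdpos k).le) (hf0 x)
        have hz0 : ∑ x ∈ Finset.univ.erase k \ G.neighborFinset k, N * d k * f x = 0 := by
          linarith [hEq1, hsd]
        have hmem : j ∈ Finset.univ.erase k \ G.neighborFinset k := by
          rw [Finset.mem_sdiff, Finset.mem_erase]
          exact ⟨⟨hjk, Finset.mem_univ j⟩, hjn⟩
        have hterm0 : N * d k * f j = 0 :=
          (Finset.sum_eq_zero_iff_of_nonneg hnn).1 hz0 j hmem
        have hpos : 0 < N * d k * f j :=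
          mul_pos (mul_pos (by linarith : (0:ℝ) < N) (hdpos k)) hfjpos
        linarith
      have hadjkj : G.Adj k j := (SimpleGraph.mem_neighborFinset _ _ _).1 hjmem
      refine ⟨hadjkj, ?_⟩
      have heq := (Finset.sum_eq_sum_iff_of_le h1le).1 hEq0 j hjmem
      exact mul_right_cancel₀ (ne_of_gt hfjpos) heq
    -- endgame
    set vlast : Fin n := ⟨n - 1, by omega⟩ with hvlast_def
    have hle_last : ∀ k : Fin n, k ≤ vlast := by
      intro k
      rw [Fin.le_def]
      have := k.isLt
      simp only [hvlast_def]
      omega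
    have hzero_le : ∀ k : Fin n, (0 : Fin n) ≤ k := by
      intro k
      rw [Fin.le_def]
      simp [Fin.val_zero]
    have hm0top : ∀ k, m k ≤ m 0 := fun k => hord 0 k (hzero_le k)
    have hmlastbot : ∀ k, m vlast ≤ m k := fun k => hord k vlast (hle_last k)
    have hne : m vlast < m 0 := by
      rcases lt_or_eq_of_le (hmlastbot 0) with h | h
      · exact h
      · exfalso
        apply hab
        have h1 : m a = m 0 := le_antisymm (hm0top a) (h ▸ hmlastbot a)
        have h2 : m b = m 0 := le_antisymm (hm0top b) (h ▸ hmlastbot b)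
        rw [h1, h2]
    have hflast : f vlast = 0 := by
      rw [hfj vlast, if_neg]
      exact not_lt.2 (hle_last i)
    have hmlast_eq : m vlast = m i := by
      have := hA1 vlast
      rw [hflast] at this
      linarith
    have hm0i : m i < m 0 := by rw [← hmlast_eq]; exact hne
    have hi0 : (0 : Fin n) < i := by
      rcases lt_or_eq_of_le (hzero_le i) with h | h
      · exact h
      · exfalso; rw [← h] at hm0i; exact lt_irrefl _ hm0i
    have hf0pos : 0 < f 0 := by
      rw [hfj 0, if_pos hi0]
      linarith
    have hstar0 : ∀ k, k ≠ (0 : Fin n) → G.Adj k 0 ∧ d 0 = N * d k := by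
      intro k hk
      exact hPadj k 0 (fun h => hk h.symm) hf0pos
    have hnb0 : G.neighborFinset (0 : Fin n) = Finset.univ.erase 0 := by
      ext j
      rw [SimpleGraph.mem_neighborFinset, Finset.mem_erase]
      constructor
      · intro h
        exact ⟨h.ne', Finset.mem_univ j⟩
      · intro ⟨h1, _⟩
        exact ((hstar0 j h1).1).symm
    have hdeg0 : G.degree (0 : Fin n) = n - 1 := by
      rw [← SimpleGraph.card_neighborFinset_eq_degree, hnb0,
        Finset.card_erase_of_mem (Finset.mem_univ _), Finset.card_univ, Fintype.card_fin]
    have hd0 : d 0 = (n : ℝ) - 1 := by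
      show ((G.degree (0 : Fin n) : ℝ)) = (n : ℝ) - 1
      rw [hdeg0]
      have : (1 : ℕ) ≤ n := by omega
      push_cast [Nat.cast_sub this]
      ring
    have hsame : ∀ k k' : Fin n, k ≠ 0 → k' ≠ 0 → d k = d k' := by
      intro k k' hk hk'
      have e1 := (hstar0 k hk).2
      have e2 := (hstar0 k' hk').2
      have hNne : N ≠ 0 := by linarith
      field_simp at e1 e2
      apply mul_left_cancel₀ hNne
      linarith
    by_cases hcase : ∃ j1 : Fin n, j1 ≠ (0 : Fin n) ∧ 0 < f j1
    · obtain ⟨j1, hj1ne, hj1pos⟩ := hcase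
      have hstar1 : ∀ k, k ≠ j1 → G.Adj k j1 ∧ d j1 = N * d k := by
        intro k hk
        exact hPadj k j1 (fun h => hk h.symm) hj1pos
      have e01 : d j1 = N * d 0 := (hstar1 0 (fun h => hj1ne h.symm)).2
      have e10 : d 0 = N * d j1 := (hstar0 j1 hj1ne).2
      have hNeq1 : N = 1 := by
        have h : d 0 = N * (N * d 0) := by rw [← e01]; exact e10
        have h2 : (N * N - 1) * d 0 = 0 := by linear_combination -h
        rcases mul_eq_zero.1 h2 with h3 | h3
        · have h4 : (N - 1) * (N + 1) = 0 := by linear_combination h3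
          rcases mul_eq_zero.1 h4 with h5 | h5
          · linarith
          · linarith
        · exact absurd h3 (hdpos 0).ne'
      have hall_d : ∀ k, d k = d 0 := by
        intro k
        by_cases hk : k = (0 : Fin n)
        · rw [hk]
        · have := (hstar0 k hk).2
          rw [hNeq1, one_mul] at this
          exact this.symm
      have hall_m : ∀ k, m k = d 0 := by
        intro k
        have h1 := hsum k
        have h2 : ∑ j ∈ G.neighborFinset k, d j = d k * d 0 := by
          rw [Finset.sum_congr rfl (fun j _ => hall_d j), Finset.sum_const,
            SimpleGraph.card_neighborFinset_eq_degree, nsmul_eq_mul]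
        rw [h2, hall_d k] at h1
        have h3 : m k * d 0 = d 0 * d 0 := by linarith
        exact mul_right_cancel₀ (hdpos 0).ne' h3
      have : m j1 - m i > 0 := by
        rw [hfj j1] at hj1pos
        by_cases h : j1 < i
        · rwa [if_pos h] at hj1pos
        · rw [if_neg h] at hj1pos; linarith
      rw [hall_m j1, hall_m i] at this
      linarith
    · push_neg at hcase
      have hfzero : ∀ j : Fin n, j ≠ 0 → f j = 0 := by
        intro j hj
        exact le_antisymm (hcase j hj) (hf0 j)
      obtain ⟨k1, hk1⟩ := exists_ne (0 : Fin n)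
      have hDk : ∀ k : Fin n, k ≠ 0 → d k = d k1 := fun k hk => hsame k k1 hk hk1
      have hd0ND : d 0 = N * d k1 := (hstar0 k1 hk1).2
      have hmk_eq : ∀ k : Fin n, k ≠ 0 → m k = m i := by
        intro k hk
        have := hA1 k
        rw [hfzero k hk] at this
        linarith
      -- m 0 = d k1
      have hm0D : m 0 * ((n : ℝ) - 1) = ((n : ℝ) - 1) * d k1 := by
        have h1 := hsum 0
        have h2 : ∑ j ∈ G.neighborFinset (0 : Fin n), d j = ((n : ℝ) - 1) * d k1 := by
          rw [hnb0]
          rw [Finset.sum_congr rfl (fun j hj => hDk j (Finset.mem_erase.1 hj).1)]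
          rw [Finset.sum_const, Finset.card_erase_of_mem (Finset.mem_univ _),
            Finset.card_univ, Fintype.card_fin, nsmul_eq_mul]
          congr 1
          have : (1 : ℕ) ≤ n := by omega
          push_cast [Nat.cast_sub this]
          ring
        rw [h2, hd0] at h1
        linarith
      have hm0D' : m 0 = d k1 := by
        have hn1 : (0 : ℝ) < (n : ℝ) - 1 := by
          have h2n : (2 : ℝ) ≤ (n : ℝ) := by exact_mod_cast hn
          linarith
        have h4 : m 0 * ((n : ℝ) - 1) = d k1 * ((n : ℝ) - 1) := by linarith [hm0D]
        exact mul_right_cancel₀ hn1.ne' h4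
      -- m k1 equation
      have hadj_k1_0 : G.Adj k1 0 := (hstar0 k1 hk1).1
      have h0mem : (0 : Fin n) ∈ G.neighborFinset k1 :=
        (SimpleGraph.mem_neighborFinset _ _ _).2 hadj_k1_0
      have herase : ∑ j ∈ (G.neighborFinset k1).erase 0, d j = (d k1 - 1) * d k1 := by
        rw [Finset.sum_congr rfl (fun j hj => hDk j (Finset.mem_erase.1 hj).1),
          Finset.sum_const, Finset.card_erase_of_mem h0mem,
          SimpleGraph.card_neighborFinset_eq_degree, nsmul_eq_mul,
          Nat.cast_sub (hdeg1 k1), Nat.cast_one]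
      have hsum_k1 : ∑ j ∈ G.neighborFinset k1, d j
          = ((n : ℝ) - 1) + (d k1 - 1) * d k1 := by
        rw [← Finset.sum_erase_add _ _ h0mem, herase, hd0]
        ring
      have hmk1 : m i * d k1 = ((n : ℝ) - 1) + (d k1 - 1) * d k1 := by
        have h1 := hsum k1
        rw [hsum_k1, hmk_eq k1 hk1] at h1
        linarith
      -- m 0 > m i
      have hm0gt : m i < d k1 := by rw [← hm0D']; exact hm0i
      have hdk1_le : d k1 ≤ (n : ℝ) - 1 := by
        have h := SimpleGraph.degree_lt_card_verts (G := G) k1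
        rw [Fintype.card_fin] at h
        have : G.degree k1 ≤ n - 1 := by omega
        have h2 : ((G.degree k1 : ℝ)) ≤ ((n - 1 : ℕ) : ℝ) := by exact_mod_cast this
        have h3 : (((n : ℕ) - 1 : ℕ) : ℝ) = (n : ℝ) - 1 := by
          have : (1 : ℕ) ≤ n := by omega
          push_cast [Nat.cast_sub this]
          ring
        rw [h3] at h2
        exact h2
      nlinarith [hdpos k1]
  · -- pseudo-regular implies equality
    intro hall
    have hSzero : S = 0 := by
      rw [hS_def]
      apply Finset.sum_eq_zero
      intro k _
      rw [hall k i, sub_self]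
    have hBmi : B = m i := by
      rw [hB_def, hs_def, hSzero]
      rw [mul_zero, add_zero, Real.sqrt_sq hmiN]
      ring
    rw [hBmi]
    apply le_antisymm
    · apply my_specRad_le G d hdpos (by linarith [hm1 i] : (0:ℝ) ≤ m i)
      intro k
      rw [hsum k, hall k i]
    · apply my_specRad_ge G d (fun h => by
        have := congrFun h i
        simp only [Pi.zero_apply] at this
        exact absurd this (by linarith [hdpos i] : d i ≠ 0))
        (by linarith [hm1 i] : (0:ℝ) ≤ m i)
      intro k
      rw [hsum k, hall k i]
end
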